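/- arXiv:2602.09198 — 3 statements merged into one kernel-verified Lean document; each statement's English description precedes it below -/
import Mathlib

section
/- (Energy inequality on the control volume to the right of a sliver.) Assume in addition that δΔx ≤ Δt/2. Let q be a C¹ function on a neighbourhood of the closure of C⁺, let g be continuous on the boundary of S, and let u be continuous on [0,Δx]. If the tested variational identity ∫₀^{Δx} q(x,Δt)² dx − ∫₀^{Δx} q(x,0)u(x) dx − ∬_{C⁺} q(∂_t q + ∂_x q) dx dt − {q·g}⁺ + ∫₀^{Δt} q(Δx,t)² dt = 0 holds, then ∫₀^{Δx} q(x,Δt)² dx − ∫₀^{Δx} u(x)² dx + ∫₀^{Δt} q(Δx,t)² dt − {g²}⁺ ≤ 0. -/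
open MeasureTheory

/-- The open sliver (rhombus) with vertices `(0,0)`, `(δΔx, Δt/2)`, `(0, Δt)`
and `(−δΔx, Δt/2)` in the `(x,t)`-plane. -/
def sliverSet (Δx Δt δ : ℝ) : Set (ℝ × ℝ) :=
  {p | |p.1| * (Δt / 2) + |p.2 - Δt / 2| * (δ * Δx) < δ * Δx * (Δt / 2)}

/-- Weighted right-face pairing `{w}⁺`: the integral of `w·(n_x + n_t)` over the
two right faces of the sliver with respect to arclength (`n` the outward unit
normal of the sliver). -/
noncomputable def pairPlus (Δx Δt δ : ℝ) (w : ℝ × ℝ → ℝ) : ℝ :=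
  (∫ s in (0:ℝ)..1, w (s * (δ * Δx), s * (Δt / 2)) * (Δt / 2 - δ * Δx)) +
  (∫ s in (0:ℝ)..1, w ((1 - s) * (δ * Δx), (1 + s) * (Δt / 2)) * (Δt / 2 + δ * Δx))

/-- Weighted left-face pairing `{w}⁻`: the integral of `w·(n_x + n_t)` over the
two left faces of the sliver with respect to arclength (`n` the outward unit
normal of the sliver). -/
noncomputable def pairMinus (Δx Δt δ : ℝ) (w : ℝ × ℝ → ℝ) : ℝ :=
  -(∫ s in (0:ℝ)..1, w (-(s * (δ * Δx)), s * (Δt / 2)) * (Δt / 2 + δ * Δx)) -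
  (∫ s in (0:ℝ)..1, w (-((1 - s) * (δ * Δx)), (1 + s) * (Δt / 2)) * (Δt / 2 - δ * Δx))

/-- The control volume to the right of the sliver:
`C⁺ = ((0,Δx)×(0,Δt)) \ cl(S)`. -/
def Cplus (Δx Δt δ : ℝ) : Set (ℝ × ℝ) :=
  (Set.Ioo 0 Δx ×ˢ Set.Ioo 0 Δt) \ closure (sliverSet Δx Δt δ)

/-- The control volume to the left of the sliver:
`C⁻ = ((−Δx,0)×(0,Δt)) \ cl(S)`. -/
def Cminus (Δx Δt δ : ℝ) : Set (ℝ × ℝ) :=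
  (Set.Ioo (-Δx) 0 ×ˢ Set.Ioo 0 Δt) \ closure (sliverSet Δx Δt δ)

/-- Partial derivative in time `∂ₜ f`. -/
noncomputable def dT (f : ℝ × ℝ → ℝ) (p : ℝ × ℝ) : ℝ := fderiv ℝ f p (0, 1)

/-- Partial derivative in space `∂ₓ f`. -/
noncomputable def dX (f : ℝ × ℝ → ℝ) (p : ℝ × ℝ) : ℝ := fderiv ℝ f p (1, 0)

set_option linter.unusedSectionVars false

/-- If a small segment emanating from `p` lies in `s`, then `p ∈ closure s`. -/
lemma seg_mem_closure {s : Set (ℝ × ℝ)} {p v : ℝ × ℝ} {θ₀ : ℝ} (h0 : 0 < θ₀)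
    (h : ∀ θ : ℝ, 0 < θ → θ < θ₀ → p + θ • v ∈ s) : p ∈ closure s := by
  rw [Metric.mem_closure_iff]
  intro ε hε
  set θ := min (θ₀ / 2) (ε / (‖v‖ + 1) / 2) with hθdef
  have hv1 : (0:ℝ) < ‖v‖ + 1 := by positivity
  have hθpos : 0 < θ := lt_min (by linarith) (by positivity)
  refine ⟨p + θ • v, h θ hθpos (lt_of_le_of_lt (min_le_left _ _) (by linarith)), ?_⟩
  have : dist (p + θ • v) p = θ * ‖v‖ := by
    rw [dist_eq_norm]
    simp [norm_smul, abs_of_pos hθpos]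
  rw [dist_comm, this]
  have hθle : θ ≤ ε / (‖v‖ + 1) / 2 := min_le_right _ _
  have h1 : θ * ‖v‖ ≤ (ε / (‖v‖ + 1) / 2) * (‖v‖ + 1) := by
    have hn : (0:ℝ) ≤ ‖v‖ := norm_nonneg v
    nlinarith
  have h2 : (ε / (‖v‖ + 1) / 2) * (‖v‖ + 1) = ε / 2 := by field_simp
  linarith
/-- Points with `φ > c` are not in the closure of the sliver. -/
lemma notin_closure_sliver {Δx Δt δ : ℝ} {p : ℝ × ℝ}
    (hyp : δ * Δx * (Δt / 2) < |p.1| * (Δt / 2) + |p.2 - Δt / 2| * (δ * Δx)) :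
    p ∉ closure (sliverSet Δx Δt δ) := by
  intro hmem
  have hsub : closure (sliverSet Δx Δt δ) ⊆
      {p : ℝ × ℝ | |p.1| * (Δt / 2) + |p.2 - Δt / 2| * (δ * Δx) ≤ δ * Δx * (Δt / 2)} := by
    refine closure_minimal (fun q hq => le_of_lt (by simpa [sliverSet] using hq))
      (isClosed_le (by continuity) continuous_const)
  exact absurd (hsub hmem) (by simpa using not_le.mpr hyp)

lemma mem_Cplus {Δx Δt δ : ℝ} {x t : ℝ} (hx0 : 0 < x) (hxΔ : x < Δx) (ht0 : 0 < t)
    (htΔ : t < Δt) (hφ : δ * Δx * (Δt / 2) < x * (Δt / 2) + |t - Δt / 2| * (δ * Δx)) :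
    (x, t) ∈ Cplus Δx Δt δ := by
  refine ⟨⟨⟨hx0, hxΔ⟩, ⟨ht0, htΔ⟩⟩, notin_closure_sliver ?_⟩
  simpa [abs_of_pos hx0] using hφ

section mem
variable {Δx Δt δ : ℝ} (hΔx : 0 < Δx) (hΔt : 0 < Δt) (hδ0 : 0 < δ) (hδ : δ ≤ 1 / 2)
    (hδΔ : δ * Δx ≤ Δt / 2)
include hΔx hΔt hδ0 hδ hδΔ

lemma mem_cl_bottom {x : ℝ} (hx : x ∈ Set.Icc 0 Δx) :
    ((x, 0) : ℝ × ℝ) ∈ closure (Cplus Δx Δt δ) := by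
  obtain ⟨hx0, hx1⟩ := hx
  apply seg_mem_closure (v := ((Δx - 2*x)/2, Δt/4)) (θ₀ := 1) one_pos
  intro θ h0 h1
  have hpt : ((x, (0:ℝ)) : ℝ × ℝ) + θ • (((Δx - 2*x)/2 : ℝ), (Δt/4 : ℝ))
      = (x + θ * ((Δx - 2*x)/2), θ * (Δt/4)) := by
    simp [Prod.ext_iff]; try ring
  rw [hpt]
  have habs : Δt/2 - θ * (Δt/4) ≤ |θ * (Δt/4) - Δt/2| := by
    rw [abs_sub_comm]; exact le_abs_self _
  refine mem_Cplus (by nlinarith) (by nlinarith) (by nlinarith) (by nlinarith) ?_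
  have hΔδ : 0 < Δx - δ * Δx := by nlinarith [mul_le_mul_of_nonneg_right hδ hΔx.le]
  nlinarith [mul_le_mul_of_nonneg_right habs (le_of_lt (mul_pos hδ0 hΔx)),
    mul_nonneg (mul_nonneg hx0 (by linarith : (0:ℝ) ≤ 1 - θ)) hΔt.le,
    mul_pos (mul_pos h0 hΔt) hΔδ]

lemma mem_cl_top {x : ℝ} (hx : x ∈ Set.Icc 0 Δx) :
    ((x, Δt) : ℝ × ℝ) ∈ closure (Cplus Δx Δt δ) := by
  obtain ⟨hx0, hx1⟩ := hx
  apply seg_mem_closure (v := ((Δx - 2*x)/2, -(Δt/4))) (θ₀ := 1) one_pos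
  intro θ h0 h1
  have hpt : ((x, Δt) : ℝ × ℝ) + θ • (((Δx - 2*x)/2 : ℝ), (-(Δt/4) : ℝ))
      = (x + θ * ((Δx - 2*x)/2), Δt - θ * (Δt/4)) := by
    simp [Prod.ext_iff]; try ring
  rw [hpt]
  have habs : Δt - θ * (Δt/4) - Δt/2 ≤ |Δt - θ * (Δt/4) - Δt/2| := le_abs_self _
  refine mem_Cplus (by nlinarith) (by nlinarith) (by nlinarith) (by nlinarith) ?_
  have hΔδ : 0 < Δx - δ * Δx := by nlinarith [mul_le_mul_of_nonneg_right hδ hΔx.le]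
  nlinarith [mul_le_mul_of_nonneg_right habs (le_of_lt (mul_pos hδ0 hΔx)),
    mul_nonneg (mul_nonneg hx0 (by linarith : (0:ℝ) ≤ 1 - θ)) hΔt.le,
    mul_pos (mul_pos h0 hΔt) hΔδ]

lemma mem_cl_right {t : ℝ} (ht : t ∈ Set.Icc 0 Δt) :
    ((Δx, t) : ℝ × ℝ) ∈ closure (Cplus Δx Δt δ) := by
  obtain ⟨ht0, ht1⟩ := ht
  apply seg_mem_closure (v := (-(Δx/2), (Δt/2 - t)/2)) (θ₀ := 1) one_pos
  intro θ h0 h1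
  have hpt : ((Δx, t) : ℝ × ℝ) + θ • ((-(Δx/2) : ℝ), ((Δt/2 - t)/2 : ℝ))
      = (Δx - θ * (Δx/2), t + θ * ((Δt/2 - t)/2)) := by
    simp [Prod.ext_iff]; try ring
  rw [hpt]
  refine mem_Cplus (by nlinarith) (by nlinarith) (by nlinarith) (by nlinarith) ?_
  nlinarith [mul_nonneg (abs_nonneg (t + θ * ((Δt/2 - t)/2) - Δt/2))
      (le_of_lt (mul_pos hδ0 hΔx)),
    mul_pos (mul_pos hΔx hΔt) (show (0:ℝ) < 1 - θ/2 - δ by linarith)]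

lemma mem_cl_face1 {s : ℝ} (hs : s ∈ Set.Icc 0 1) :
    ((s * (δ * Δx), s * (Δt / 2)) : ℝ × ℝ) ∈ closure (Cplus Δx Δt δ) := by
  obtain ⟨hs0, hs1⟩ := hs
  have ha : 0 < δ * Δx := mul_pos hδ0 hΔx
  apply seg_mem_closure (v := (Δt, δ * Δx))
    (θ₀ := min (Δx/(2*Δt)) (Δt/(4*(δ*Δx)))) (lt_min (by positivity) (by positivity))
  intro θ h0 h1
  have h1a : θ < Δx/(2*Δt) := lt_of_lt_of_le h1 (min_le_left _ _)
  have h1b : θ < Δt/(4*(δ*Δx)) := lt_of_lt_of_le h1 (min_le_right _ _)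
  have h1a' : θ * (2*Δt) < Δx := (lt_div_iff₀ (by positivity)).mp h1a
  have h1b' : θ * (4*(δ*Δx)) < Δt := (lt_div_iff₀ (by positivity)).mp h1b
  have hpt : ((s * (δ * Δx), s * (Δt / 2)) : ℝ × ℝ) + θ • ((Δt : ℝ), (δ * Δx : ℝ))
      = (s * (δ * Δx) + θ * Δt, s * (Δt / 2) + θ * (δ * Δx)) := by
    simp [Prod.ext_iff]; try ring
  rw [hpt]
  have habs : Δt/2 - (s * (Δt / 2) + θ * (δ * Δx))
      ≤ |s * (Δt / 2) + θ * (δ * Δx) - Δt/2| := by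
    rw [abs_sub_comm]; exact le_abs_self _
  refine mem_Cplus (by nlinarith) (by nlinarith) (by nlinarith) (by nlinarith) ?_
  have ha2 : δ * Δx * (δ * Δx) ≤ (Δt/2) * (Δt/2) := mul_le_mul hδΔ hδΔ ha.le (by positivity)
  have hkey : 0 < Δt * Δt / 2 - (δ * Δx) * (δ * Δx) := by nlinarith
  nlinarith [mul_le_mul_of_nonneg_right habs (le_of_lt ha), mul_pos h0 hkey]

lemma mem_cl_face2 {s : ℝ} (hs : s ∈ Set.Icc 0 1) :
    (((1 - s) * (δ * Δx), (1 + s) * (Δt / 2)) : ℝ × ℝ) ∈ closure (Cplus Δx Δt δ) := by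
  obtain ⟨hs0, hs1⟩ := hs
  have ha : 0 < δ * Δx := mul_pos hδ0 hΔx
  apply seg_mem_closure (v := (Δt, -(δ * Δx)))
    (θ₀ := min (Δx/(2*Δt)) (Δt/(4*(δ*Δx)))) (lt_min (by positivity) (by positivity))
  intro θ h0 h1
  have h1a : θ < Δx/(2*Δt) := lt_of_lt_of_le h1 (min_le_left _ _)
  have h1b : θ < Δt/(4*(δ*Δx)) := lt_of_lt_of_le h1 (min_le_right _ _)
  have h1a' : θ * (2*Δt) < Δx := (lt_div_iff₀ (by positivity)).mp h1a
  have h1b' : θ * (4*(δ*Δx)) < Δt := (lt_div_iff₀ (by positivity)).mp h1b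
  have hpt : (((1 - s) * (δ * Δx), (1 + s) * (Δt / 2)) : ℝ × ℝ)
        + θ • ((Δt : ℝ), (-(δ * Δx) : ℝ))
      = ((1 - s) * (δ * Δx) + θ * Δt, (1 + s) * (Δt / 2) - θ * (δ * Δx)) := by
    simp [Prod.ext_iff]; try ring
  rw [hpt]
  have habs : (1 + s) * (Δt / 2) - θ * (δ * Δx) - Δt/2
      ≤ |(1 + s) * (Δt / 2) - θ * (δ * Δx) - Δt/2| := le_abs_self _
  refine mem_Cplus (by nlinarith) (by nlinarith) (by nlinarith) (by nlinarith) ?_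
  have ha2 : δ * Δx * (δ * Δx) ≤ (Δt/2) * (Δt/2) := mul_le_mul hδΔ hδΔ ha.le (by positivity)
  have hkey : 0 < Δt * Δt / 2 - (δ * Δx) * (δ * Δx) := by nlinarith
  nlinarith [mul_le_mul_of_nonneg_right habs (le_of_lt ha), mul_pos h0 hkey]

/-- Membership (in `closure (Cplus)`) of the lower vertical segment at `x ∈ (0, δΔx)`. -/
lemma mem_seg_low {x : ℝ} (hx0 : 0 < x) (hxa : x < δ * Δx) :
    ∀ t ∈ Set.Icc 0 ((Δt/2) * x / (δ * Δx)), ((x, t) : ℝ × ℝ) ∈ closure (Cplus Δx Δt δ) := by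
  have ha : 0 < δ * Δx := mul_pos hδ0 hΔx
  have haΔ : δ * Δx < Δx := by nlinarith
  rintro t ⟨ht0, ht1⟩
  have htmh : (Δt/2) * x / (δ * Δx) < Δt/2 := by
    rw [div_lt_iff₀ ha]; nlinarith
  rcases eq_or_lt_of_le ht1 with h1 | h1
  · -- t = t₋ : face point with s = x / (δΔx)
    have hxeq : ((x, t) : ℝ × ℝ) = ((x/(δ*Δx)) * (δ * Δx), (x/(δ*Δx)) * (Δt / 2)) := by
      rw [Prod.mk.injEq]
      constructor
      · field_simp
      · rw [h1]; field_simp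
    rw [hxeq]
    exact mem_cl_face1 hΔx hΔt hδ0 hδ hδΔ ⟨by positivity, by rw [div_le_one ha]; linarith⟩
  rcases eq_or_lt_of_le ht0 with h0 | h0
  · rw [← h0]; exact mem_cl_bottom hΔx hΔt hδ0 hδ hδΔ ⟨hx0.le, by linarith⟩
  · apply subset_closure
    have e : t * (δ * Δx) < (Δt/2) * x := (lt_div_iff₀ ha).mp h1
    refine mem_Cplus hx0 (by linarith) h0 (by linarith) ?_
    have habs : Δt/2 - t ≤ |t - Δt/2| := by rw [abs_sub_comm]; exact le_abs_self _
    nlinarith [mul_le_mul_of_nonneg_right habs ha.le]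

/-- Membership of the upper vertical segment at `x ∈ (0, δΔx)`. -/
lemma mem_seg_high {x : ℝ} (hx0 : 0 < x) (hxa : x < δ * Δx) :
    ∀ t ∈ Set.Icc (Δt - (Δt/2) * x / (δ * Δx)) Δt,
      ((x, t) : ℝ × ℝ) ∈ closure (Cplus Δx Δt δ) := by
  have ha : 0 < δ * Δx := mul_pos hδ0 hΔx
  have haΔ : δ * Δx < Δx := by nlinarith
  rintro t ⟨ht0, ht1⟩
  have htm0 : 0 < (Δt/2) * x / (δ * Δx) := by positivity
  have htmh : (Δt/2) * x / (δ * Δx) < Δt/2 := by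
    rw [div_lt_iff₀ ha]; nlinarith
  rcases eq_or_lt_of_le ht1 with h1 | h1
  · rw [h1]; exact mem_cl_top hΔx hΔt hδ0 hδ hδΔ ⟨hx0.le, by linarith⟩
  rcases eq_or_lt_of_le ht0 with h0 | h0
  · -- t = t₊ : face point with s = 1 - x/(δΔx)
    have hxeq : ((x, t) : ℝ × ℝ)
        = ((1 - (1 - x/(δ*Δx))) * (δ * Δx), (1 + (1 - x/(δ*Δx))) * (Δt / 2)) := by
      rw [Prod.mk.injEq]
      constructor
      · field_simp; ring
      · rw [← h0]; field_simp; ring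
    rw [hxeq]
    refine mem_cl_face2 hΔx hΔt hδ0 hδ hδΔ ⟨by simp; rw [div_le_one ha]; linarith, by simp; positivity⟩
  · apply subset_closure
    have e : Δt - t < (Δt/2) * x / (δ * Δx) := by linarith
    have e' : (Δt - t) * (δ * Δx) < (Δt/2) * x := (lt_div_iff₀ ha).mp e
    refine mem_Cplus hx0 (by linarith) (by linarith) h1 ?_
    have habs : t - Δt/2 ≤ |t - Δt/2| := le_abs_self _
    nlinarith [mul_le_mul_of_nonneg_right habs ha.le]

/-- Membership of the full vertical segment at `x ∈ [δΔx, Δx)`. -/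
lemma mem_seg_full {x : ℝ} (hxa : δ * Δx ≤ x) (hxΔ : x < Δx) :
    ∀ t ∈ Set.Icc 0 Δt, ((x, t) : ℝ × ℝ) ∈ closure (Cplus Δx Δt δ) := by
  have ha : 0 < δ * Δx := mul_pos hδ0 hΔx
  have hx0 : 0 < x := lt_of_lt_of_le ha hxa
  rintro t ⟨ht0, ht1⟩
  rcases eq_or_lt_of_le ht0 with h0 | h0
  · rw [← h0]; exact mem_cl_bottom hΔx hΔt hδ0 hδ hδΔ ⟨hx0.le, hxΔ.le⟩
  rcases eq_or_lt_of_le ht1 with h1 | h1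
  · rw [h1]; exact mem_cl_top hΔx hΔt hδ0 hδ hδΔ ⟨hx0.le, hxΔ.le⟩
  by_cases hφ : δ * Δx * (Δt / 2) < x * (Δt / 2) + |t - Δt / 2| * (δ * Δx)
  · exact subset_closure (mem_Cplus hx0 hxΔ h0 h1 hφ)
  · push_neg at hφ
    have habs : 0 ≤ |t - Δt/2| := abs_nonneg _
    have hh : 0 < Δt/2 := by linarith
    have hxea : x = δ * Δx := by nlinarith [mul_le_mul_of_nonneg_right hxa hh.le]
    have hte : |t - Δt/2| = 0 := by
      rcases eq_or_lt_of_le habs with h | h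
      · exact h.symm
      · exfalso; nlinarith [mul_le_mul_of_nonneg_right hxa hh.le, mul_pos h ha]
    have ht : t = Δt/2 := by
      have := abs_eq_zero.mp hte; linarith
    have hxeq : ((x, t) : ℝ × ℝ) = ((1:ℝ) * (δ * Δx), (1:ℝ) * (Δt / 2)) := by
      rw [Prod.mk.injEq]; constructor
      · simpa using hxea
      · simpa using ht
    rw [hxeq]
    exact mem_cl_face1 hΔx hΔt hδ0 hδ hδΔ ⟨zero_le_one, le_refl 1⟩

/-- Membership of the horizontal segment at `t ∈ (0, Δt)`. -/
lemma mem_seg_hor {t : ℝ} (ht0 : 0 < t) (htΔ : t < Δt) :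
    ∀ x ∈ Set.Icc (δ * Δx - |t - Δt/2| * (δ * Δx) / (Δt/2)) Δx,
      ((x, t) : ℝ × ℝ) ∈ closure (Cplus Δx Δt δ) := by
  have ha : 0 < δ * Δx := mul_pos hδ0 hΔx
  have hh : 0 < Δt/2 := by linarith
  rintro x ⟨hx0, hx1⟩
  rcases eq_or_lt_of_le hx1 with h1 | h1
  · rw [h1]; exact mem_cl_right hΔx hΔt hδ0 hδ hδΔ ⟨ht0.le, htΔ.le⟩
  rcases eq_or_lt_of_le hx0 with h0 | h0
  · -- x = xl t : face point
    by_cases hth : t ≤ Δt/2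
    · have hs : t/(Δt/2) ∈ Set.Icc (0:ℝ) 1 :=
        ⟨by positivity, by rw [div_le_one hh]; linarith⟩
      have hxeq : ((x, t) : ℝ × ℝ) = ((t/(Δt/2)) * (δ * Δx), (t/(Δt/2)) * (Δt / 2)) := by
        rw [Prod.mk.injEq]; constructor
        · rw [← h0, abs_of_nonpos (by linarith)]; field_simp; ring
        · field_simp
      rw [hxeq]; exact mem_cl_face1 hΔx hΔt hδ0 hδ hδΔ hs
    · push_neg at hth
      have hs : t/(Δt/2) - 1 ∈ Set.Icc (0:ℝ) 1 := by
        constructor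
        · simp; rw [le_div_iff₀ hh]; linarith
        · simp; rw [div_le_iff₀ hh]; linarith
      have hxeq : ((x, t) : ℝ × ℝ)
          = ((1 - (t/(Δt/2) - 1)) * (δ * Δx), (1 + (t/(Δt/2) - 1)) * (Δt / 2)) := by
        rw [Prod.mk.injEq]; constructor
        · rw [← h0, abs_of_pos (by linarith)]; field_simp
        · field_simp; ring
      rw [hxeq]; exact mem_cl_face2 hΔx hΔt hδ0 hδ hδΔ hs
  · apply subset_closure
    have hxl0 : 0 ≤ δ * Δx - |t - Δt/2| * (δ * Δx) / (Δt/2) := by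
      have habs : |t - Δt/2| ≤ Δt/2 := by
        rw [abs_le]; constructor <;> linarith
      rw [sub_nonneg, div_le_iff₀ hh]
      nlinarith
    refine mem_Cplus (by linarith) h1 ht0 htΔ ?_
    have e : (δ * Δx - |t - Δt/2| * (δ * Δx) / (Δt/2)) * (Δt/2)
        = δ * Δx * (Δt/2) - |t - Δt/2| * (δ * Δx) := by
      field_simp
    nlinarith [mul_lt_mul_of_pos_right h0 hh]

end mem

/-- FTC along a vertical segment. -/
lemma ftc_line_t {f : ℝ × ℝ → ℝ} {U : Set (ℝ × ℝ)} (hU : IsOpen U)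
    (hf : ContDiffOn ℝ 1 f U) {x α β : ℝ} (hαβ : α ≤ β)
    (hmem : ∀ t ∈ Set.Icc α β, ((x, t) : ℝ × ℝ) ∈ U) :
    ∫ t in Set.Ioo α β, (fderiv ℝ f (x, t)) (0, 1) = f (x, β) - f (x, α) := by
  rw [← integral_Ioc_eq_integral_Ioo, ← intervalIntegral.integral_of_le hαβ]
  apply intervalIntegral.integral_eq_sub_of_hasDerivAt
  · intro t ht
    rw [Set.uIcc_of_le hαβ] at ht
    have hdiff : DifferentiableAt ℝ f (x, t) :=
      (hf.differentiableOn one_ne_zero).differentiableAt (hU.mem_nhds (hmem t ht))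
    have hline : HasDerivAt (fun τ : ℝ => ((x, τ) : ℝ × ℝ)) ((0 : ℝ), (1 : ℝ)) t :=
      HasDerivAt.prodMk (hasDerivAt_const t x) (hasDerivAt_id t)
    exact hdiff.hasFDerivAt.comp_hasDerivAt t hline
  · have hc : ContinuousOn (fun p : ℝ × ℝ => (fderiv ℝ f p) (0, 1)) U :=
      (hf.continuousOn_fderiv_of_isOpen hU le_rfl).clm_apply continuousOn_const
    have : ContinuousOn (fun t : ℝ => (fderiv ℝ f (x, t)) (0, 1)) (Set.uIcc α β) := by
      rw [Set.uIcc_of_le hαβ]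
      exact hc.comp (Continuous.continuousOn (by continuity)) (fun t ht => hmem t ht)
    exact this.intervalIntegrable

/-- FTC along a horizontal segment. -/
lemma ftc_line_x {f : ℝ × ℝ → ℝ} {U : Set (ℝ × ℝ)} (hU : IsOpen U)
    (hf : ContDiffOn ℝ 1 f U) {t α β : ℝ} (hαβ : α ≤ β)
    (hmem : ∀ x ∈ Set.Icc α β, ((x, t) : ℝ × ℝ) ∈ U) :
    ∫ x in Set.Ioo α β, (fderiv ℝ f (x, t)) (1, 0) = f (β, t) - f (α, t) := by
  rw [← integral_Ioc_eq_integral_Ioo, ← intervalIntegral.integral_of_le hαβ]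
  apply intervalIntegral.integral_eq_sub_of_hasDerivAt
  · intro ξ hξ
    rw [Set.uIcc_of_le hαβ] at hξ
    have hdiff : DifferentiableAt ℝ f (ξ, t) :=
      (hf.differentiableOn one_ne_zero).differentiableAt (hU.mem_nhds (hmem ξ hξ))
    have hline : HasDerivAt (fun ξ : ℝ => ((ξ, t) : ℝ × ℝ)) ((1 : ℝ), (0 : ℝ)) ξ :=
      HasDerivAt.prodMk (hasDerivAt_id ξ) (hasDerivAt_const ξ t)
    exact hdiff.hasFDerivAt.comp_hasDerivAt ξ hline
  · have hc : ContinuousOn (fun p : ℝ × ℝ => (fderiv ℝ f p) (1, 0)) U :=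
      (hf.continuousOn_fderiv_of_isOpen hU le_rfl).clm_apply continuousOn_const
    have : ContinuousOn (fun ξ : ℝ => (fderiv ℝ f (ξ, t)) (1, 0)) (Set.uIcc α β) := by
      rw [Set.uIcc_of_le hαβ]
      exact hc.comp (Continuous.continuousOn (by continuity)) (fun ξ hξ => hmem ξ hξ)
    exact this.intervalIntegrable

section Jt
variable {Δx Δt δ : ℝ} {f : ℝ × ℝ → ℝ} {U : Set (ℝ × ℝ)}

set_option maxHeartbeats 1000000 in
lemma Jt_eq (hΔx : 0 < Δx) (hΔt : 0 < Δt) (hδ0 : 0 < δ) (hδ : δ ≤ 1 / 2)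
    (hδΔ : δ * Δx ≤ Δt / 2) (hU : IsOpen U) (hCU : closure (Cplus Δx Δt δ) ⊆ U)
    (hf : ContDiffOn ℝ 1 f U) :
    ∫ p in Cplus Δx Δt δ, (fderiv ℝ f p) (0, 1)
      = (∫ x in (0:ℝ)..Δx, (f (x, Δt) - f (x, 0)))
        + (δ * Δx) * ((∫ s in (0:ℝ)..1, f (s * (δ * Δx), s * (Δt / 2)))
            - ∫ s in (0:ℝ)..1, f ((1 - s) * (δ * Δx), (1 + s) * (Δt / 2))) := by
  have ha : 0 < δ * Δx := mul_pos hδ0 hΔx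
  have hh : 0 < Δt / 2 := by linarith
  have haΔ : δ * Δx < Δx := by nlinarith
  set F : ℝ × ℝ → ℝ := fun p => (fderiv ℝ f p) (0, 1) with hF
  set C := Cplus Δx Δt δ with hC
  have hCmeas : MeasurableSet C :=
    (measurableSet_Ioo.prod measurableSet_Ioo).diff isClosed_closure.measurableSet
  have hFc : ContinuousOn F U :=
    (hf.continuousOn_fderiv_of_isOpen hU le_rfl).clm_apply continuousOn_const
  have hCsub : C ⊆ Set.Icc 0 Δx ×ˢ Set.Icc 0 Δt := fun p hp =>
    ⟨⟨hp.1.1.1.le, hp.1.1.2.le⟩, ⟨hp.1.2.1.le, hp.1.2.2.le⟩⟩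
  have hclC : IsCompact (closure C) :=
    (isCompact_Icc.prod isCompact_Icc).of_isClosed_subset isClosed_closure
      (closure_minimal hCsub (isCompact_Icc.prod isCompact_Icc).isClosed)
  have hFint : IntegrableOn F C :=
    (((hFc.mono hCU).integrableOn_compact hclC)).mono_set subset_closure
  have hFind : Integrable (C.indicator F) := hFint.integrable_indicator hCmeas
  -- the face and edge functions
  set Gface : ℝ → ℝ :=
    fun x => f (x, (Δt/2) * x / (δ * Δx)) - f (x, Δt - (Δt/2) * x / (δ * Δx)) with hGface
  set Gval : ℝ → ℝ :=
    fun x => (f (x, Δt) - f (x, 0)) + (Set.Ioo 0 (δ * Δx)).indicator Gface x with hGval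
  -- continuity of boundary restrictions
  have hcont_top : ContinuousOn (fun x : ℝ => f (x, Δt)) (Set.Icc 0 Δx) :=
    hf.continuousOn.comp (Continuous.continuousOn (by continuity))
      (fun x hx => hCU (mem_cl_top hΔx hΔt hδ0 hδ hδΔ hx))
  have hcont_bot : ContinuousOn (fun x : ℝ => f (x, 0)) (Set.Icc 0 Δx) :=
    hf.continuousOn.comp (Continuous.continuousOn (by continuity))
      (fun x hx => hCU (mem_cl_bottom hΔx hΔt hδ0 hδ hδΔ hx))
  have hgf1maps : ∀ x ∈ Set.Icc 0 (δ * Δx), ((x, (Δt/2) * x / (δ * Δx)) : ℝ × ℝ) ∈ U := by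
    rintro x ⟨h0, h1⟩
    have hxeq : ((x, (Δt/2) * x / (δ * Δx)) : ℝ × ℝ)
        = ((x / (δ * Δx)) * (δ * Δx), (x / (δ * Δx)) * (Δt / 2)) := by
      rw [Prod.mk.injEq]; constructor
      · field_simp
      · field_simp
    rw [hxeq]
    exact hCU (mem_cl_face1 hΔx hΔt hδ0 hδ hδΔ ⟨by positivity, by rw [div_le_one ha]; linarith⟩)
  have hgf2maps : ∀ x ∈ Set.Icc 0 (δ * Δx), ((x, Δt - (Δt/2) * x / (δ * Δx)) : ℝ × ℝ) ∈ U := by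
    rintro x ⟨h0, h1⟩
    have hxeq : ((x, Δt - (Δt/2) * x / (δ * Δx)) : ℝ × ℝ)
        = ((1 - (1 - x / (δ * Δx))) * (δ * Δx), (1 + (1 - x / (δ * Δx))) * (Δt / 2)) := by
      rw [Prod.mk.injEq]; constructor
      · field_simp; ring
      · field_simp; ring
    rw [hxeq]
    refine hCU (mem_cl_face2 hΔx hΔt hδ0 hδ hδΔ ⟨?_, ?_⟩)
    · simp only [Set.mem_Icc, sub_nonneg]
      rw [div_le_one ha]; linarith
    · simp only [sub_le_self_iff]; positivity
  have hcont_gf : ContinuousOn Gface (Set.Icc 0 (δ * Δx)) := by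
    apply ContinuousOn.sub
    · exact hf.continuousOn.comp (Continuous.continuousOn (by fun_prop)) hgf1maps
    · exact hf.continuousOn.comp (Continuous.continuousOn (by fun_prop)) hgf2maps
  -- the inner integral identity
  have inner : ∀ x : ℝ, (∫ t : ℝ, C.indicator F (x, t)) = (Set.Ioo 0 Δx).indicator Gval x := by
    intro x
    have hpre : {t : ℝ | (x, t) ∈ C} = Prod.mk x ⁻¹' C := rfl
    have hslm : MeasurableSet {t : ℝ | (x, t) ∈ C} := by
      rw [hpre]; exact hCmeas.preimage measurable_prodMk_left
    have hind : (fun t : ℝ => C.indicator F (x, t))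
        = Set.indicator {t : ℝ | (x, t) ∈ C} (fun t => F (x, t)) := by
      funext t
      by_cases h : (x, t) ∈ C
      · rw [Set.indicator_of_mem h, Set.indicator_of_mem (by exact h)]
      · rw [Set.indicator_of_notMem h, Set.indicator_of_notMem (by exact h)]
    rw [hind, integral_indicator hslm]
    by_cases hx : x ∈ Set.Ioo 0 Δx
    · obtain ⟨hx0, hx1⟩ := hx
      rw [Set.indicator_of_mem (Set.mem_Ioo.mpr ⟨hx0, hx1⟩)]
      have hlow : ∀ t : ℝ, 0 < t → t < Δt →
          (t < (Δt/2) * x / (δ * Δx) ∨ Δt - (Δt/2) * x / (δ * Δx) < t) → (x, t) ∈ C := by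
        intro t h0 h1 hor
        rcases hor with hlt | hgt
        · have e : t * (δ * Δx) < (Δt/2) * x := (lt_div_iff₀ ha).mp hlt
          refine mem_Cplus hx0 hx1 h0 h1 ?_
          have habs : Δt/2 - t ≤ |t - Δt/2| := by rw [abs_sub_comm]; exact le_abs_self _
          nlinarith [mul_le_mul_of_nonneg_right habs ha.le]
        · have e : (Δt - t) * (δ * Δx) < (Δt/2) * x :=
            (lt_div_iff₀ ha).mp (by linarith)
          refine mem_Cplus hx0 hx1 h0 h1 ?_
          have habs : t - Δt/2 ≤ |t - Δt/2| := le_abs_self _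
          nlinarith [mul_le_mul_of_nonneg_right habs ha.le]
      have hhigh : ∀ t : ℝ, (x, t) ∈ C → 0 < t ∧ t < Δt ∧
          ¬ ((Δt/2) * x / (δ * Δx) < t ∧ t < Δt - (Δt/2) * x / (δ * Δx)) := by
        intro t ht
        refine ⟨ht.1.2.1, ht.1.2.2, ?_⟩
        rintro ⟨h1, h2⟩
        apply ht.2
        apply subset_closure
        show |x| * (Δt / 2) + |t - Δt / 2| * (δ * Δx) < δ * Δx * (Δt / 2)
        rw [abs_of_pos hx0]
        have e1 : (Δt/2) * x < t * (δ * Δx) := (div_lt_iff₀ ha).mp h1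
        have e2 : (Δt/2) * x < (Δt - t) * (δ * Δx) := (div_lt_iff₀ ha).mp (by linarith)
        have habs : |t - Δt/2| * (δ * Δx) = |(t - Δt/2) * (δ * Δx)| := by
          rw [abs_mul, abs_of_pos ha]
        rw [habs]
        rw [show δ * Δx * (Δt / 2) = x * (Δt/2) + (δ * Δx * (Δt / 2) - x * (Δt/2)) by ring]
        have : |(t - Δt/2) * (δ * Δx)| < δ * Δx * (Δt / 2) - x * (Δt/2) := by
          rw [abs_lt]; constructor
          · nlinarith
          · nlinarith
        linarith
      by_cases hxa : x < δ * Δx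
      · have htm0 : 0 < (Δt/2) * x / (δ * Δx) := by positivity
        have htmh : (Δt/2) * x / (δ * Δx) < Δt/2 := by rw [div_lt_iff₀ ha]; nlinarith
        have hae : {t : ℝ | (x, t) ∈ C}
            =ᵐ[volume] ((Set.Ioo 0 ((Δt/2) * x / (δ * Δx))
                ∪ Set.Ioo (Δt - (Δt/2) * x / (δ * Δx)) Δt) : Set ℝ) := by
          rw [MeasureTheory.ae_eq_set]
          constructor
          · refine measure_mono_null ?_
              (Set.Finite.measure_zero (Set.Finite.insert ((Δt/2) * x / (δ * Δx))
                (Set.finite_singleton (Δt - (Δt/2) * x / (δ * Δx)))) volume)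
            rintro t ⟨htC, htE⟩
            obtain ⟨h0', h1', h2'⟩ := hhigh t htC
            have hE1 : ¬(0 < t ∧ t < (Δt/2) * x / (δ * Δx)) := fun h => htE (Or.inl h)
            have hE2 : ¬(Δt - (Δt/2) * x / (δ * Δx) < t ∧ t < Δt) := fun h => htE (Or.inr h)
            simp only [Set.mem_insert_iff, Set.mem_singleton_iff]
            rcases lt_trichotomy t ((Δt/2) * x / (δ * Δx)) with hc | hc | hc
            · exact absurd ⟨h0', hc⟩ hE1
            · exact Or.inl hc
            · rcases lt_trichotomy t (Δt - (Δt/2) * x / (δ * Δx)) with hd | hd | hd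
              · exact absurd ⟨hc, hd⟩ h2'
              · exact Or.inr hd
              · exact absurd ⟨hd, h1'⟩ hE2
          · have : (Set.Ioo 0 ((Δt/2) * x / (δ * Δx))
                ∪ Set.Ioo (Δt - (Δt/2) * x / (δ * Δx)) Δt) \ {t : ℝ | (x, t) ∈ C} = ∅ := by
              apply Set.diff_eq_empty.mpr
              rintro t (⟨h0, h1⟩ | ⟨h0, h1⟩)
              · exact hlow t h0 (by linarith) (Or.inl h1)
              · exact hlow t (by linarith) h1 (Or.inr h0)
            rw [this]; exact measure_empty
        rw [setIntegral_congr_set hae]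
        have hdisj : Disjoint (Set.Ioo 0 ((Δt/2) * x / (δ * Δx)))
            (Set.Ioo (Δt - (Δt/2) * x / (δ * Δx)) Δt) := by
          apply Set.disjoint_left.mpr
          rintro t ⟨_, h1⟩ ⟨h2, _⟩; linarith
        have hmemlow := mem_seg_low hΔx hΔt hδ0 hδ hδΔ hx0 hxa
        have hmemhigh := mem_seg_high hΔx hΔt hδ0 hδ hδΔ hx0 hxa
        have hint1 : IntegrableOn (fun t => F (x, t)) (Set.Ioo 0 ((Δt/2) * x / (δ * Δx))) := by
          refine (((hFc.mono hCU).comp (Continuous.continuousOn (by continuity))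
            (fun t ht => hmemlow t ht)).integrableOn_compact isCompact_Icc).mono_set
            Set.Ioo_subset_Icc_self
        have hint2 : IntegrableOn (fun t => F (x, t))
            (Set.Ioo (Δt - (Δt/2) * x / (δ * Δx)) Δt) := by
          refine (((hFc.mono hCU).comp (Continuous.continuousOn (by continuity))
            (fun t ht => hmemhigh t ht)).integrableOn_compact isCompact_Icc).mono_set
            Set.Ioo_subset_Icc_self
        rw [setIntegral_union hdisj measurableSet_Ioo hint1 hint2]
        rw [show (fun t => F (x, t)) = fun t => (fderiv ℝ f (x, t)) (0, 1) from rfl]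
        rw [ftc_line_t hU hf htm0.le (fun t ht => hCU (hmemlow t ht)),
          ftc_line_t hU hf (show Δt - (Δt/2) * x / (δ * Δx) ≤ Δt by linarith)
            (fun t ht => hCU (hmemhigh t ht))]
        rw [hGval]
        simp only
        rw [Set.indicator_of_mem (Set.mem_Ioo.mpr ⟨hx0, hxa⟩), hGface]
        ring
      · push_neg at hxa
        have htmge : Δt/2 ≤ (Δt/2) * x / (δ * Δx) := by
          rw [le_div_iff₀ ha]; nlinarith
        have hae : {t : ℝ | (x, t) ∈ C} =ᵐ[volume] Set.Ioo 0 Δt := by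
          rw [MeasureTheory.ae_eq_set]
          constructor
          · have : {t : ℝ | (x, t) ∈ C} \ Set.Ioo 0 Δt = ∅ := by
              apply Set.diff_eq_empty.mpr
              intro t htC
              exact ⟨(hhigh t htC).1, (hhigh t htC).2.1⟩
            rw [this]; exact measure_empty
          · refine measure_mono_null ?_
              ((Set.finite_singleton (Δt/2)).measure_zero volume)
            rintro t ⟨⟨h0, h1⟩, htC⟩
            have hnot : ¬ (t < (Δt/2) * x / (δ * Δx) ∨ Δt - (Δt/2) * x / (δ * Δx) < t) :=
              fun hor => htC (hlow t h0 h1 hor)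
            push_neg at hnot
            simp only [Set.mem_singleton_iff]
            linarith [hnot.1, hnot.2]
        rw [setIntegral_congr_set hae]
        have hmemfull := mem_seg_full hΔx hΔt hδ0 hδ hδΔ hxa hx1
        rw [show (fun t => F (x, t)) = fun t => (fderiv ℝ f (x, t)) (0, 1) from rfl]
        rw [ftc_line_t hU hf hΔt.le (fun t ht => hCU (hmemfull t ht))]
        rw [hGval]
        simp only
        rw [Set.indicator_of_notMem (fun hmem => absurd hmem.2 (not_lt.mpr hxa) :
          x ∉ Set.Ioo 0 (δ * Δx))]
        ring
    · have hemp : {t : ℝ | (x, t) ∈ C} = ∅ :=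
        Set.eq_empty_iff_forall_notMem.mpr (fun t ht => hx ht.1.1)
      rw [hemp, Set.indicator_of_notMem hx]
      simp
  -- assemble
  have hbase_int : IntegrableOn (fun x : ℝ => f (x, Δt) - f (x, 0)) (Set.Ioo 0 Δx) :=
    ((hcont_top.sub hcont_bot).integrableOn_compact isCompact_Icc).mono_set
      Set.Ioo_subset_Icc_self
  have hgf_int : IntegrableOn Gface (Set.Ioo 0 (δ * Δx)) :=
    (hcont_gf.integrableOn_compact isCompact_Icc).mono_set Set.Ioo_subset_Icc_self
  have hind_int : IntegrableOn ((Set.Ioo 0 (δ * Δx)).indicator Gface) (Set.Ioo 0 Δx) :=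
    (hgf_int.integrable_indicator measurableSet_Ioo).integrableOn
  calc ∫ p in C, F p
      = ∫ p : ℝ × ℝ, C.indicator F p := (integral_indicator hCmeas).symm
    _ = ∫ x : ℝ, ∫ t : ℝ, C.indicator F (x, t) := by
        rw [Measure.volume_eq_prod] at hFind ⊢
        exact MeasureTheory.integral_prod _ hFind
    _ = ∫ x : ℝ, (Set.Ioo 0 Δx).indicator Gval x :=
        integral_congr_ae (Filter.Eventually.of_forall inner)
    _ = ∫ x in Set.Ioo 0 Δx, Gval x := integral_indicator measurableSet_Ioo
    _ = (∫ x in Set.Ioo 0 Δx, (f (x, Δt) - f (x, 0)))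
        + ∫ x in Set.Ioo 0 Δx, (Set.Ioo 0 (δ * Δx)).indicator Gface x := by
        rw [hGval]
        exact integral_add hbase_int hind_int
    _ = (∫ x in (0:ℝ)..Δx, (f (x, Δt) - f (x, 0)))
        + ∫ x in Set.Ioo 0 (δ * Δx), Gface x := by
        rw [setIntegral_indicator measurableSet_Ioo,
          Set.inter_eq_right.mpr (Set.Ioo_subset_Ioo le_rfl haΔ.le),
          intervalIntegral.integral_of_le hΔx.le, integral_Ioc_eq_integral_Ioo]
    _ = (∫ x in (0:ℝ)..Δx, (f (x, Δt) - f (x, 0)))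
        + (δ * Δx) * ((∫ s in (0:ℝ)..1, f (s * (δ * Δx), s * (Δt / 2)))
            - ∫ s in (0:ℝ)..1, f ((1 - s) * (δ * Δx), (1 + s) * (Δt / 2))) := by
        congr 1
        have hcomp := intervalIntegral.integral_comp_mul_left (a := (0:ℝ)) (b := (1:ℝ))
          Gface ha.ne'
        rw [mul_zero, mul_one, smul_eq_mul] at hcomp
        have heq : ∫ x in (0:ℝ)..(δ * Δx), Gface x
            = (δ * Δx) * ∫ s in (0:ℝ)..1, Gface ((δ * Δx) * s) := by
          rw [hcomp]; field_simp
        rw [← integral_Ioc_eq_integral_Ioo, ← intervalIntegral.integral_of_le ha.le, heq]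
        congr 1
        have hGfs : ∀ s : ℝ, Gface ((δ * Δx) * s)
            = f (s * (δ * Δx), s * (Δt / 2)) - f (s * (δ * Δx), Δt - s * (Δt / 2)) := by
          intro s
          rw [hGface]
          simp only
          have e1 : (Δt/2) * ((δ * Δx) * s) / (δ * Δx) = s * (Δt / 2) := by
            field_simp
          rw [e1, mul_comm (δ * Δx) s]
        rw [show (fun s : ℝ => Gface (δ * Δx * s))
            = fun s : ℝ => f (s * (δ * Δx), s * (Δt / 2))
                - f (s * (δ * Δx), Δt - s * (Δt / 2)) from funext hGfs]
        have hf1i : IntervalIntegrable (fun s : ℝ => f (s * (δ * Δx), s * (Δt / 2)))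
            volume 0 1 := by
          apply ContinuousOn.intervalIntegrable
          rw [Set.uIcc_of_le zero_le_one]
          exact hf.continuousOn.comp (Continuous.continuousOn (by fun_prop))
            (fun s hs => hCU (mem_cl_face1 hΔx hΔt hδ0 hδ hδΔ hs))
        have hf2maps : ∀ s ∈ Set.Icc (0:ℝ) 1,
            ((s * (δ * Δx), Δt - s * (Δt / 2)) : ℝ × ℝ) ∈ U := by
          rintro s ⟨h0, h1⟩
          have : ((s * (δ * Δx), Δt - s * (Δt / 2)) : ℝ × ℝ)
              = ((1 - (1 - s)) * (δ * Δx), (1 + (1 - s)) * (Δt / 2)) := by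
            rw [Prod.mk.injEq]; constructor
            · ring_nf
            · ring_nf
          rw [this]
          exact hCU (mem_cl_face2 hΔx hΔt hδ0 hδ hδΔ ⟨by linarith, by linarith⟩)
        have hf2i : IntervalIntegrable (fun s : ℝ => f (s * (δ * Δx), Δt - s * (Δt / 2)))
            volume 0 1 := by
          apply ContinuousOn.intervalIntegrable
          rw [Set.uIcc_of_le zero_le_one]
          exact hf.continuousOn.comp (Continuous.continuousOn (by fun_prop)) hf2maps
        rw [intervalIntegral.integral_sub hf1i hf2i]
        congr 1
        have hsl := intervalIntegral.integral_comp_sub_left (a := (0:ℝ)) (b := (1:ℝ))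
          (fun s : ℝ => f (s * (δ * Δx), Δt - s * (Δt / 2))) 1
        rw [sub_self, sub_zero] at hsl
        rw [← hsl]
        apply intervalIntegral.integral_congr
        intro s _
        simp only
        have : ((1 - s) * (δ * Δx), Δt - (1 - s) * (Δt / 2))
            = (((1 - s) * (δ * Δx), (1 + s) * (Δt / 2)) : ℝ × ℝ) := by
          rw [Prod.mk.injEq]; constructor
          · rfl
          · ring
        rw [this]
end Jt

section Jx
variable {Δx Δt δ : ℝ} {f : ℝ × ℝ → ℝ} {U : Set (ℝ × ℝ)}

set_option maxHeartbeats 1000000 in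
lemma Jx_eq (hΔx : 0 < Δx) (hΔt : 0 < Δt) (hδ0 : 0 < δ) (hδ : δ ≤ 1 / 2)
    (hδΔ : δ * Δx ≤ Δt / 2) (hU : IsOpen U) (hCU : closure (Cplus Δx Δt δ) ⊆ U)
    (hf : ContDiffOn ℝ 1 f U) :
    ∫ p in Cplus Δx Δt δ, (fderiv ℝ f p) (1, 0)
      = (∫ t in (0:ℝ)..Δt, f (Δx, t))
        - (Δt / 2) * ((∫ s in (0:ℝ)..1, f (s * (δ * Δx), s * (Δt / 2)))
            + ∫ s in (0:ℝ)..1, f ((1 - s) * (δ * Δx), (1 + s) * (Δt / 2))) := by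
  have ha : 0 < δ * Δx := mul_pos hδ0 hΔx
  have hh : 0 < Δt / 2 := by linarith
  have haΔ : δ * Δx < Δx := by nlinarith
  set F : ℝ × ℝ → ℝ := fun p => (fderiv ℝ f p) (1, 0) with hF
  set C := Cplus Δx Δt δ with hC
  have hCmeas : MeasurableSet C :=
    (measurableSet_Ioo.prod measurableSet_Ioo).diff isClosed_closure.measurableSet
  have hFc : ContinuousOn F U :=
    (hf.continuousOn_fderiv_of_isOpen hU le_rfl).clm_apply continuousOn_const
  have hCsub : C ⊆ Set.Icc 0 Δx ×ˢ Set.Icc 0 Δt := fun p hp =>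
    ⟨⟨hp.1.1.1.le, hp.1.1.2.le⟩, ⟨hp.1.2.1.le, hp.1.2.2.le⟩⟩
  have hclC : IsCompact (closure C) :=
    (isCompact_Icc.prod isCompact_Icc).of_isClosed_subset isClosed_closure
      (closure_minimal hCsub (isCompact_Icc.prod isCompact_Icc).isClosed)
  have hFint : IntegrableOn F C :=
    (((hFc.mono hCU).integrableOn_compact hclC)).mono_set subset_closure
  have hFind : Integrable (C.indicator F) := hFint.integrable_indicator hCmeas
  -- the "left boundary" curve
  set xl : ℝ → ℝ := fun t => δ * Δx - |t - Δt/2| * (δ * Δx) / (Δt/2) with hxl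
  have hxl0 : ∀ t ∈ Set.Icc 0 Δt, 0 ≤ xl t := by
    rintro t ⟨h0, h1⟩
    have habs : |t - Δt/2| ≤ Δt/2 := by rw [abs_le]; constructor <;> linarith
    rw [hxl]
    simp only [sub_nonneg]
    rw [div_le_iff₀ hh]
    nlinarith
  have hxla : ∀ t : ℝ, xl t ≤ δ * Δx := by
    intro t
    rw [hxl]
    simp only [sub_le_self_iff]
    positivity
  have hxlmem : ∀ t ∈ Set.Icc 0 Δt, ((xl t, t) : ℝ × ℝ) ∈ closure (Cplus Δx Δt δ) := by
    rintro t ⟨h0, h1⟩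
    by_cases hth : t ≤ Δt/2
    · have hs : t/(Δt/2) ∈ Set.Icc (0:ℝ) 1 := ⟨by positivity, by rw [div_le_one hh]; linarith⟩
      have hxeq : ((xl t, t) : ℝ × ℝ) = ((t/(Δt/2)) * (δ * Δx), (t/(Δt/2)) * (Δt / 2)) := by
        rw [Prod.mk.injEq]; constructor
        · rw [hxl]; simp only
          rw [abs_of_nonpos (by linarith)]; field_simp; ring
        · field_simp
      rw [hxeq]; exact mem_cl_face1 hΔx hΔt hδ0 hδ hδΔ hs
    · push_neg at hth
      have hs : t/(Δt/2) - 1 ∈ Set.Icc (0:ℝ) 1 := by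
        constructor
        · simp only [sub_nonneg]; rw [le_div_iff₀ hh]; linarith
        · simp only [tsub_le_iff_right]; rw [div_le_iff₀ hh]; linarith
      have hxeq : ((xl t, t) : ℝ × ℝ)
          = ((1 - (t/(Δt/2) - 1)) * (δ * Δx), (1 + (t/(Δt/2) - 1)) * (Δt / 2)) := by
        rw [Prod.mk.injEq]; constructor
        · rw [hxl]; simp only
          rw [abs_of_pos (by linarith)]; field_simp
        · field_simp; ring
      rw [hxeq]; exact mem_cl_face2 hΔx hΔt hδ0 hδ hδΔ hs
  have hcont_xlf : ContinuousOn (fun t : ℝ => f (xl t, t)) (Set.Icc 0 Δt) := by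
    apply hf.continuousOn.comp
    · apply Continuous.continuousOn
      apply Continuous.prodMk
      · rw [hxl]; fun_prop
      · fun_prop
    · exact fun t ht => hCU (hxlmem t ht)
  have hcont_right : ContinuousOn (fun t : ℝ => f (Δx, t)) (Set.Icc 0 Δt) :=
    hf.continuousOn.comp (Continuous.continuousOn (by continuity))
      (fun t ht => hCU (mem_cl_right hΔx hΔt hδ0 hδ hδΔ ht))
  set Gx : ℝ → ℝ := fun t => f (Δx, t) - f (xl t, t) with hGx
  -- the inner integral identity
  have inner : ∀ t : ℝ, (∫ x : ℝ, C.indicator F (x, t)) = (Set.Ioo 0 Δt).indicator Gx t := by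
    intro t
    have hpre : {x : ℝ | (x, t) ∈ C} = (fun x : ℝ => ((x, t) : ℝ × ℝ)) ⁻¹' C := rfl
    have hslm : MeasurableSet {x : ℝ | (x, t) ∈ C} := by
      rw [hpre]; exact hCmeas.preimage (measurable_id.prodMk measurable_const)
    have hind : (fun x : ℝ => C.indicator F (x, t))
        = Set.indicator {x : ℝ | (x, t) ∈ C} (fun x => F (x, t)) := by
      funext x
      by_cases h : (x, t) ∈ C
      · rw [Set.indicator_of_mem h, Set.indicator_of_mem (by exact h)]
      · rw [Set.indicator_of_notMem h, Set.indicator_of_notMem (by exact h)]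
    rw [hind, integral_indicator hslm]
    by_cases ht : t ∈ Set.Ioo 0 Δt
    · obtain ⟨ht0, ht1⟩ := ht
      rw [Set.indicator_of_mem (Set.mem_Ioo.mpr ⟨ht0, ht1⟩)]
      have hxl0' : 0 ≤ xl t := hxl0 t ⟨ht0.le, ht1.le⟩
      have exl : xl t * (Δt/2) = δ * Δx * (Δt/2) - |t - Δt/2| * (δ * Δx) := by
        rw [hxl]; field_simp
      have hlow : ∀ x : ℝ, xl t < x → x < Δx → (x, t) ∈ C := by
        intro x h1 h2
        refine mem_Cplus (by linarith) h2 ht0 ht1 ?_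
        nlinarith [mul_lt_mul_of_pos_right h1 hh]
      have hhigh : ∀ x : ℝ, (x, t) ∈ C → 0 < x ∧ x < Δx ∧ xl t ≤ x := by
        intro x hx
        refine ⟨hx.1.1.1, hx.1.1.2, ?_⟩
        by_contra hcon
        push_neg at hcon
        apply hx.2
        apply subset_closure
        show |x| * (Δt / 2) + |t - Δt / 2| * (δ * Δx) < δ * Δx * (Δt / 2)
        rw [abs_of_pos hx.1.1.1]
        nlinarith [mul_lt_mul_of_pos_right hcon hh]
      have hae : {x : ℝ | (x, t) ∈ C} =ᵐ[volume] Set.Ioo (xl t) Δx := by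
        rw [MeasureTheory.ae_eq_set]
        constructor
        · refine measure_mono_null ?_ ((Set.finite_singleton (xl t)).measure_zero volume)
          rintro x ⟨hxC, hxE⟩
          obtain ⟨h0', h1', h2'⟩ := hhigh x hxC
          simp only [Set.mem_Ioo, not_and] at hxE
          simp only [Set.mem_singleton_iff]
          rcases eq_or_lt_of_le h2' with h | h
          · exact h.symm
          · exact absurd h1' (hxE h)
        · have : Set.Ioo (xl t) Δx \ {x : ℝ | (x, t) ∈ C} = ∅ := by
            apply Set.diff_eq_empty.mpr
            rintro x ⟨h1, h2⟩
            exact hlow x h1 h2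
          rw [this]; exact measure_empty
      rw [setIntegral_congr_set hae]
      rw [show (fun x => F (x, t)) = fun x => (fderiv ℝ f (x, t)) (1, 0) from rfl]
      rw [ftc_line_x hU hf (by linarith [hxla t] : xl t ≤ Δx) ?memx]
      case memx =>
        intro x hx
        rcases eq_or_lt_of_le hx.1 with h | h
        · rw [← h]; exact hCU (hxlmem t ⟨ht0.le, ht1.le⟩)
        rcases eq_or_lt_of_le hx.2 with h' | h'
        · rw [h']; exact hCU (mem_cl_right hΔx hΔt hδ0 hδ hδΔ ⟨ht0.le, ht1.le⟩)
        · exact hCU (subset_closure (hlow x h h'))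
    · have hemp : {x : ℝ | (x, t) ∈ C} = ∅ :=
        Set.eq_empty_iff_forall_notMem.mpr (fun x hx => ht hx.1.2)
      rw [hemp, Set.indicator_of_notMem ht]
      simp
  -- assemble
  have hxlint1 : IntervalIntegrable (fun t : ℝ => f (xl t, t)) volume 0 (Δt/2) := by
    apply ContinuousOn.intervalIntegrable
    rw [Set.uIcc_of_le hh.le]
    exact hcont_xlf.mono (Set.Icc_subset_Icc le_rfl (by linarith))
  have hxlint2 : IntervalIntegrable (fun t : ℝ => f (xl t, t)) volume (Δt/2) Δt := by
    apply ContinuousOn.intervalIntegrable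
    rw [Set.uIcc_of_le (by linarith : Δt/2 ≤ Δt)]
    exact hcont_xlf.mono (Set.Icc_subset_Icc (by linarith) le_rfl)
  calc ∫ p in C, F p
      = ∫ p : ℝ × ℝ, C.indicator F p := (integral_indicator hCmeas).symm
    _ = ∫ t : ℝ, ∫ x : ℝ, C.indicator F (x, t) := by
        rw [Measure.volume_eq_prod] at hFind ⊢
        exact MeasureTheory.integral_prod_symm _ hFind
    _ = ∫ t : ℝ, (Set.Ioo 0 Δt).indicator Gx t :=
        integral_congr_ae (Filter.Eventually.of_forall inner)
    _ = ∫ t in Set.Ioo 0 Δt, Gx t := integral_indicator measurableSet_Ioo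
    _ = ∫ t in (0:ℝ)..Δt, Gx t := by
        rw [intervalIntegral.integral_of_le hΔt.le, integral_Ioc_eq_integral_Ioo]
    _ = (∫ t in (0:ℝ)..Δt, f (Δx, t)) - ∫ t in (0:ℝ)..Δt, f (xl t, t) := by
        rw [hGx]
        apply intervalIntegral.integral_sub
        · apply ContinuousOn.intervalIntegrable
          rw [Set.uIcc_of_le hΔt.le]; exact hcont_right
        · apply ContinuousOn.intervalIntegrable
          rw [Set.uIcc_of_le hΔt.le]; exact hcont_xlf
    _ = (∫ t in (0:ℝ)..Δt, f (Δx, t))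
        - (Δt / 2) * ((∫ s in (0:ℝ)..1, f (s * (δ * Δx), s * (Δt / 2)))
            + ∫ s in (0:ℝ)..1, f ((1 - s) * (δ * Δx), (1 + s) * (Δt / 2))) := by
        congr 1
        rw [← intervalIntegral.integral_add_adjacent_intervals hxlint1 hxlint2]
        have hc1 := intervalIntegral.integral_comp_mul_left (a := (0:ℝ)) (b := (1:ℝ))
          (fun t : ℝ => f (xl t, t)) hh.ne'
        rw [mul_zero, mul_one, smul_eq_mul] at hc1
        have he1 : ∫ t in (0:ℝ)..(Δt/2), f (xl t, t)
            = (Δt/2) * ∫ s in (0:ℝ)..1, f (xl (Δt/2 * s), Δt/2 * s) := by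
          rw [hc1]; field_simp
        have hc2 := intervalIntegral.integral_comp_mul_add (a := (0:ℝ)) (b := (1:ℝ))
          (fun t : ℝ => f (xl t, t)) hh.ne' (Δt/2)
        rw [mul_zero, mul_one, zero_add, smul_eq_mul] at hc2
        have he2 : ∫ t in (Δt/2)..Δt, f (xl t, t)
            = (Δt/2) * ∫ s in (0:ℝ)..1, f (xl (Δt/2 * s + Δt/2), Δt/2 * s + Δt/2) := by
          rw [hc2]
          rw [show Δt/2 + Δt/2 = Δt by ring]
          field_simp
        rw [he1, he2]
        have heq1 : ∫ s in (0:ℝ)..1, f (xl (Δt/2 * s), Δt/2 * s)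
            = ∫ s in (0:ℝ)..1, f (s * (δ * Δx), s * (Δt / 2)) := by
          apply intervalIntegral.integral_congr
          intro s hs
          rw [Set.uIcc_of_le zero_le_one] at hs
          obtain ⟨hs0, hs1⟩ := hs
          show f (xl (Δt/2 * s), Δt/2 * s) = f (s * (δ * Δx), s * (Δt / 2))
          have : ((xl (Δt/2 * s), Δt/2 * s) : ℝ × ℝ) = (s * (δ * Δx), s * (Δt / 2)) := by
            rw [Prod.mk.injEq]; constructor
            · rw [hxl]; simp only
              rw [abs_of_nonpos (by nlinarith)]; field_simp; ring
            · ring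
          rw [this]
        have heq2 : ∫ s in (0:ℝ)..1, f (xl (Δt/2 * s + Δt/2), Δt/2 * s + Δt/2)
            = ∫ s in (0:ℝ)..1, f ((1 - s) * (δ * Δx), (1 + s) * (Δt / 2)) := by
          apply intervalIntegral.integral_congr
          intro s hs
          rw [Set.uIcc_of_le zero_le_one] at hs
          obtain ⟨hs0, hs1⟩ := hs
          show f (xl (Δt/2 * s + Δt/2), Δt/2 * s + Δt/2) = f ((1 - s) * (δ * Δx), (1 + s) * (Δt / 2))
          have : ((xl (Δt/2 * s + Δt/2), Δt/2 * s + Δt/2) : ℝ × ℝ)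
              = ((1 - s) * (δ * Δx), (1 + s) * (Δt / 2)) := by
            rw [Prod.mk.injEq]; constructor
            · rw [hxl]; simp only
              rw [show Δt/2 * s + Δt/2 - Δt/2 = Δt/2 * s by ring,
                abs_of_nonneg (by positivity)]
              field_simp
            · ring
          rw [this]
        rw [heq1, heq2]
        ring
end Jx

lemma isOpen_sliverSet (Δx Δt δ : ℝ) : IsOpen (sliverSet Δx Δt δ) :=
  isOpen_lt (by continuity) continuous_const

lemma face1_mem_frontier {Δx Δt δ : ℝ} (hΔx : 0 < Δx) (hΔt : 0 < Δt) (hδ0 : 0 < δ)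
    {s : ℝ} (hs : s ∈ Set.Icc 0 1) :
    ((s * (δ * Δx), s * (Δt / 2)) : ℝ × ℝ) ∈ frontier (sliverSet Δx Δt δ) := by
  obtain ⟨hs0, hs1⟩ := hs
  have ha : 0 < δ * Δx := mul_pos hδ0 hΔx
  have hh : 0 < Δt / 2 := by linarith
  rw [(isOpen_sliverSet Δx Δt δ).frontier_eq, Set.mem_diff]
  constructor
  · apply seg_mem_closure (v := (-(s * (δ * Δx)), Δt/2 - s * (Δt/2))) (θ₀ := 1) one_pos
    intro θ h0 h1
    show |_| * (Δt / 2) + |_| * (δ * Δx) < δ * Δx * (Δt / 2)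
    have e1 : (s * (δ * Δx) + θ * -(s * (δ * Δx))) = (1 - θ) * s * (δ * Δx) := by ring
    have e2 : (s * (Δt / 2) + θ * (Δt/2 - s * (Δt/2))) - Δt / 2
        = -((1 - θ) * (1 - s) * (Δt/2)) := by ring
    simp only [Prod.fst, Prod.snd, smul_eq_mul, Prod.mk_add_mk, Prod.smul_mk] at *
    rw [e1, e2, abs_neg,
      abs_of_nonneg (mul_nonneg (mul_nonneg (by linarith : (0:ℝ) ≤ 1 - θ) hs0) ha.le),
      abs_of_nonneg (mul_nonneg (mul_nonneg (by linarith : (0:ℝ) ≤ 1 - θ)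
        (by linarith : (0:ℝ) ≤ 1 - s)) hh.le)]
    nlinarith [mul_pos (mul_pos h0 ha) hh]
  · intro hmem
    have : |s * (δ * Δx)| * (Δt / 2) + |s * (Δt / 2) - Δt / 2| * (δ * Δx)
        < δ * Δx * (Δt / 2) := hmem
    rw [abs_of_nonneg (by positivity), abs_of_nonpos (by nlinarith)] at this
    nlinarith
lemma face2_mem_frontier {Δx Δt δ : ℝ} (hΔx : 0 < Δx) (hΔt : 0 < Δt) (hδ0 : 0 < δ)
    {s : ℝ} (hs : s ∈ Set.Icc 0 1) :
    (((1 - s) * (δ * Δx), (1 + s) * (Δt / 2)) : ℝ × ℝ) ∈ frontier (sliverSet Δx Δt δ) := by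
  obtain ⟨hs0, hs1⟩ := hs
  have ha : 0 < δ * Δx := mul_pos hδ0 hΔx
  have hh : 0 < Δt / 2 := by linarith
  rw [(isOpen_sliverSet Δx Δt δ).frontier_eq, Set.mem_diff]
  constructor
  · apply seg_mem_closure (v := (-((1 - s) * (δ * Δx)), Δt/2 - (1 + s) * (Δt/2)))
      (θ₀ := 1) one_pos
    intro θ h0 h1
    show |_| * (Δt / 2) + |_| * (δ * Δx) < δ * Δx * (Δt / 2)
    have e1 : ((1 - s) * (δ * Δx) + θ * -((1 - s) * (δ * Δx)))
        = (1 - θ) * (1 - s) * (δ * Δx) := by ring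
    have e2 : ((1 + s) * (Δt / 2) + θ * (Δt/2 - (1 + s) * (Δt/2))) - Δt / 2
        = (1 - θ) * s * (Δt/2) := by ring
    simp only [Prod.fst, Prod.snd, smul_eq_mul, Prod.mk_add_mk, Prod.smul_mk] at *
    rw [e1, e2,
      abs_of_nonneg (mul_nonneg (mul_nonneg (by linarith : (0:ℝ) ≤ 1 - θ)
        (by linarith : (0:ℝ) ≤ 1 - s)) ha.le),
      abs_of_nonneg (mul_nonneg (mul_nonneg (by linarith : (0:ℝ) ≤ 1 - θ) hs0) hh.le)]
    nlinarith [mul_pos (mul_pos h0 ha) hh]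
  · intro hmem
    have : |(1 - s) * (δ * Δx)| * (Δt / 2) + |(1 + s) * (Δt / 2) - Δt / 2| * (δ * Δx)
        < δ * Δx * (Δt / 2) := hmem
    rw [abs_of_nonneg (by nlinarith), abs_of_nonneg (by nlinarith)] at this
    nlinarith

lemma face_split (Q G : ℝ → ℝ) (c : ℝ) (hQ : ContinuousOn Q (Set.Icc 0 1))
    (hG : ContinuousOn G (Set.Icc 0 1)) :
    ∫ s in (0:ℝ)..1, (Q s - G s)^2 * c
      = (∫ s in (0:ℝ)..1, (Q s)^2 * c) - 2 * (∫ s in (0:ℝ)..1, (Q s * G s) * c)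
        + ∫ s in (0:ℝ)..1, (G s)^2 * c := by
  have hu : Set.uIcc (0:ℝ) 1 = Set.Icc 0 1 := Set.uIcc_of_le zero_le_one
  have hQi : IntervalIntegrable (fun s => (Q s)^2 * c) volume 0 1 := by
    apply ContinuousOn.intervalIntegrable; rw [hu]
    exact ((hQ.pow 2).mul continuousOn_const)
  have hGi : IntervalIntegrable (fun s => (G s)^2 * c) volume 0 1 := by
    apply ContinuousOn.intervalIntegrable; rw [hu]
    exact ((hG.pow 2).mul continuousOn_const)
  have hQGi : IntervalIntegrable (fun s => (Q s * G s) * c) volume 0 1 := by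
    apply ContinuousOn.intervalIntegrable; rw [hu]
    exact ((hQ.mul hG).mul continuousOn_const)
  have e : (fun s : ℝ => (Q s - G s)^2 * c)
      = fun s => (Q s)^2 * c - (2 * ((Q s * G s) * c) - (G s)^2 * c) :=
    funext fun s => by ring
  rw [e, intervalIntegral.integral_sub hQi ((hQGi.const_mul 2).sub hGi),
    intervalIntegral.integral_sub (hQGi.const_mul 2) hGi,
    intervalIntegral.integral_const_mul]
  ring


lemma pairPlus_split (Δx Δt δ : ℝ) (q g : ℝ × ℝ → ℝ)
    (hQ1 : ContinuousOn (fun s : ℝ => q (s * (δ * Δx), s * (Δt / 2))) (Set.Icc 0 1))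
    (hG1 : ContinuousOn (fun s : ℝ => g (s * (δ * Δx), s * (Δt / 2))) (Set.Icc 0 1))
    (hQ2 : ContinuousOn (fun s : ℝ => q ((1 - s) * (δ * Δx), (1 + s) * (Δt / 2))) (Set.Icc 0 1))
    (hG2 : ContinuousOn (fun s : ℝ => g ((1 - s) * (δ * Δx), (1 + s) * (Δt / 2))) (Set.Icc 0 1)) :
    pairPlus Δx Δt δ (fun p => (q p - g p) ^ 2)
      = pairPlus Δx Δt δ (fun p => (q p) ^ 2) - 2 * pairPlus Δx Δt δ (fun p => q p * g p)
        + pairPlus Δx Δt δ (fun p => (g p) ^ 2) := by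
  simp only [pairPlus]
  have h1 := face_split (fun s : ℝ => q (s * (δ * Δx), s * (Δt / 2)))
    (fun s : ℝ => g (s * (δ * Δx), s * (Δt / 2))) (Δt / 2 - δ * Δx) hQ1 hG1
  have h2 := face_split (fun s : ℝ => q ((1 - s) * (δ * Δx), (1 + s) * (Δt / 2)))
    (fun s : ℝ => g ((1 - s) * (δ * Δx), (1 + s) * (Δt / 2))) (Δt / 2 + δ * Δx) hQ2 hG2
  rw [h1, h2]
  ring

lemma pairPlus_nonneg {Δx Δt δ : ℝ} (hΔx : 0 < Δx) (hδ0 : 0 < δ) (hδΔ : δ * Δx ≤ Δt / 2)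
    (w : ℝ × ℝ → ℝ) (hw : ∀ p, 0 ≤ w p) : 0 ≤ pairPlus Δx Δt δ w := by
  have ha : 0 < δ * Δx := mul_pos hδ0 hΔx
  have h1 : (0:ℝ) ≤ Δt / 2 - δ * Δx := by linarith
  have h2 : (0:ℝ) ≤ Δt / 2 + δ * Δx := by linarith
  apply add_nonneg
  · exact intervalIntegral.integral_nonneg zero_le_one
      (fun s _ => mul_nonneg (hw _) h1)
  · exact intervalIntegral.integral_nonneg zero_le_one
      (fun s _ => mul_nonneg (hw _) h2)


set_option maxHeartbeats 1000000 in
/-- Energy inequality on the control volume to the right of a sliver.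
Assume `δΔx ≤ Δt/2`.  If `q` is `C¹` on a neighbourhood of the closure of `C⁺`,
`g` is continuous on the boundary of `S`, `u` is continuous on `[0,Δx]`, and the
tested variational identity
`∫₀^{Δx} q(x,Δt)² dx − ∫₀^{Δx} q(x,0)u(x) dx − ∬_{C⁺} q(∂ₜq + ∂ₓq) dx dt
  − {q·g}⁺ + ∫₀^{Δt} q(Δx,t)² dt = 0`
holds, then
`∫₀^{Δx} q(x,Δt)² dx − ∫₀^{Δx} u(x)² dx + ∫₀^{Δt} q(Δx,t)² dt − {g²}⁺ ≤ 0`. -/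
theorem energy_inequality_Cplus (Δx Δt δ : ℝ)
    (hΔx : 0 < Δx) (hΔt : 0 < Δt) (hδ0 : 0 < δ) (hδ : δ ≤ 1 / 2)
    (hδΔ : δ * Δx ≤ Δt / 2)
    (q : ℝ × ℝ → ℝ) (U : Set (ℝ × ℝ)) (hU : IsOpen U)
    (hCU : closure (Cplus Δx Δt δ) ⊆ U) (hq : ContDiffOn ℝ 1 q U)
    (g : ℝ × ℝ → ℝ) (hg : ContinuousOn g (frontier (sliverSet Δx Δt δ)))
    (u : ℝ → ℝ) (hu : ContinuousOn u (Set.Icc 0 Δx))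
    (hvar : (∫ x in (0:ℝ)..Δx, (q (x, Δt)) ^ 2)
        - (∫ x in (0:ℝ)..Δx, q (x, 0) * u x)
        - (∫ p in Cplus Δx Δt δ, q p * (dT q p + dX q p))
        - pairPlus Δx Δt δ (fun p => q p * g p)
        + (∫ t in (0:ℝ)..Δt, (q (Δx, t)) ^ 2) = 0) :
    (∫ x in (0:ℝ)..Δx, (q (x, Δt)) ^ 2) - (∫ x in (0:ℝ)..Δx, (u x) ^ 2)
      + (∫ t in (0:ℝ)..Δt, (q (Δx, t)) ^ 2)
      - pairPlus Δx Δt δ (fun p => (g p) ^ 2) ≤ 0 := by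
  have ha : 0 < δ * Δx := mul_pos hδ0 hΔx
  have hh : 0 < Δt / 2 := by linarith
  have huIcc01 : Set.uIcc (0:ℝ) 1 = Set.Icc 0 1 := Set.uIcc_of_le zero_le_one
  have huIccx : Set.uIcc (0:ℝ) Δx = Set.Icc 0 Δx := Set.uIcc_of_le hΔx.le
  set C := Cplus Δx Δt δ with hC
  have hCmeas : MeasurableSet C :=
    (measurableSet_Ioo.prod measurableSet_Ioo).diff isClosed_closure.measurableSet
  set f : ℝ × ℝ → ℝ := fun p => q p * q p with hf
  have hfC : ContDiffOn ℝ 1 f U := hq.mul hq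
  -- integrability of partial derivatives of f on C
  have hCsub : C ⊆ Set.Icc 0 Δx ×ˢ Set.Icc 0 Δt := fun p hp =>
    ⟨⟨hp.1.1.1.le, hp.1.1.2.le⟩, ⟨hp.1.2.1.le, hp.1.2.2.le⟩⟩
  have hclC : IsCompact (closure C) :=
    (isCompact_Icc.prod isCompact_Icc).of_isClosed_subset isClosed_closure
      (closure_minimal hCsub (isCompact_Icc.prod isCompact_Icc).isClosed)
  have hFtint : IntegrableOn (fun p => (fderiv ℝ f p) (0, 1)) C := by
    refine ((((hfC.continuousOn_fderiv_of_isOpen hU le_rfl).clm_apply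
      continuousOn_const).mono hCU).integrableOn_compact hclC).mono_set subset_closure
  have hFxint : IntegrableOn (fun p => (fderiv ℝ f p) (1, 0)) C := by
    refine ((((hfC.continuousOn_fderiv_of_isOpen hU le_rfl).clm_apply
      continuousOn_const).mono hCU).integrableOn_compact hclC).mono_set subset_closure
  -- the divergence of f is 2 q (dT q + dX q) on C
  have hEq : Set.EqOn (fun p : ℝ × ℝ => q p * (dT q p + dX q p))
      (fun p => (1/2) * ((fderiv ℝ f p) (0, 1) + (fderiv ℝ f p) (1, 0))) C := by
    intro p hp
    have hpU : p ∈ U := hCU (subset_closure hp)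
    have hdq : DifferentiableAt ℝ q p :=
      (hq.differentiableOn one_ne_zero).differentiableAt (hU.mem_nhds hpU)
    have hfd : HasFDerivAt f (q p • fderiv ℝ q p + q p • fderiv ℝ q p) p :=
      hdq.hasFDerivAt.mul hdq.hasFDerivAt
    simp only
    rw [hfd.fderiv]
    simp only [dT, dX, ContinuousLinearMap.add_apply, ContinuousLinearMap.coe_smul',
      Pi.smul_apply, smul_eq_mul]
    ring
  have hIdiv : ∫ p in C, q p * (dT q p + dX q p)
      = (1/2) * ((∫ p in C, (fderiv ℝ f p) (0, 1)) + ∫ p in C, (fderiv ℝ f p) (1, 0)) := by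
    rw [setIntegral_congr_fun hCmeas hEq, MeasureTheory.integral_const_mul,
      integral_add hFtint hFxint]
  have hJt := Jt_eq hΔx hΔt hδ0 hδ hδΔ hU hCU hfC
  have hJx := Jx_eq hΔx hΔt hδ0 hδ hδΔ hU hCU hfC
  -- rewrite the boundary terms appearing in hJt, hJx in terms of q^2
  have hqtop : ContinuousOn (fun x : ℝ => q (x, Δt)) (Set.Icc 0 Δx) :=
    hq.continuousOn.comp (Continuous.continuousOn (by continuity))
      (fun x hx => hCU (mem_cl_top hΔx hΔt hδ0 hδ hδΔ hx))
  have hqbot : ContinuousOn (fun x : ℝ => q (x, 0)) (Set.Icc 0 Δx) :=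
    hq.continuousOn.comp (Continuous.continuousOn (by continuity))
      (fun x hx => hCU (mem_cl_bottom hΔx hΔt hδ0 hδ hδΔ hx))
  have htop : ∫ x in (0:ℝ)..Δx, (f (x, Δt) - f (x, 0))
      = (∫ x in (0:ℝ)..Δx, (q (x, Δt)) ^ 2) - ∫ x in (0:ℝ)..Δx, (q (x, 0)) ^ 2 := by
    have h1 : IntervalIntegrable (fun x : ℝ => f (x, Δt)) volume 0 Δx := by
      apply ContinuousOn.intervalIntegrable; rw [huIccx]; exact hqtop.mul hqtop
    have h2 : IntervalIntegrable (fun x : ℝ => f (x, 0)) volume 0 Δx := by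
      apply ContinuousOn.intervalIntegrable; rw [huIccx]; exact hqbot.mul hqbot
    rw [intervalIntegral.integral_sub h1 h2]
    congr 1
    · exact intervalIntegral.integral_congr (fun x _ => (pow_two (q (x, Δt))).symm)
    · exact intervalIntegral.integral_congr (fun x _ => (pow_two (q (x, 0))).symm)
  have hright : ∫ t in (0:ℝ)..Δt, f (Δx, t) = ∫ t in (0:ℝ)..Δt, (q (Δx, t)) ^ 2 :=
    intervalIntegral.integral_congr (fun t _ => (pow_two (q (Δx, t))).symm)
  have hface1 : ∫ s in (0:ℝ)..1, f (s * (δ * Δx), s * (Δt / 2))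
      = ∫ s in (0:ℝ)..1, (q (s * (δ * Δx), s * (Δt / 2))) ^ 2 :=
    intervalIntegral.integral_congr (fun s _ => (pow_two _).symm)
  have hface2 : ∫ s in (0:ℝ)..1, f ((1 - s) * (δ * Δx), (1 + s) * (Δt / 2))
      = ∫ s in (0:ℝ)..1, (q ((1 - s) * (δ * Δx), (1 + s) * (Δt / 2))) ^ 2 :=
    intervalIntegral.integral_congr (fun s _ => (pow_two _).symm)
  rw [htop, hface1, hface2] at hJt
  rw [hright, hface1, hface2] at hJx
  -- expansion of the u-term
  have h1i : IntervalIntegrable (fun x : ℝ => (q (x, 0)) ^ 2) volume 0 Δx := by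
    apply ContinuousOn.intervalIntegrable; rw [huIccx]; exact hqbot.pow 2
  have h2i : IntervalIntegrable (fun x : ℝ => q (x, 0) * u x) volume 0 Δx := by
    apply ContinuousOn.intervalIntegrable; rw [huIccx]; exact hqbot.mul hu
  have h3i : IntervalIntegrable (fun x : ℝ => (u x) ^ 2) volume 0 Δx := by
    apply ContinuousOn.intervalIntegrable; rw [huIccx]; exact hu.pow 2
  have husq : ∫ x in (0:ℝ)..Δx, (q (x, 0) - u x) ^ 2
      = (∫ x in (0:ℝ)..Δx, (q (x, 0)) ^ 2) - 2 * (∫ x in (0:ℝ)..Δx, q (x, 0) * u x)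
        + ∫ x in (0:ℝ)..Δx, (u x) ^ 2 := by
    have e : (fun x : ℝ => (q (x, 0) - u x) ^ 2)
        = fun x => (q (x, 0)) ^ 2 - (2 * (q (x, 0) * u x) - (u x) ^ 2) :=
      funext fun x => by ring
    rw [e, intervalIntegral.integral_sub h1i ((h2i.const_mul 2).sub h3i),
      intervalIntegral.integral_sub (h2i.const_mul 2) h3i,
      intervalIntegral.integral_const_mul]
    ring
  have husq_nn : 0 ≤ ∫ x in (0:ℝ)..Δx, (q (x, 0) - u x) ^ 2 :=
    intervalIntegral.integral_nonneg hΔx.le (fun x _ => sq_nonneg _)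
  -- face continuity for q and g
  have hQ1 : ContinuousOn (fun s : ℝ => q (s * (δ * Δx), s * (Δt / 2))) (Set.Icc 0 1) :=
    hq.continuousOn.comp (Continuous.continuousOn (by continuity))
      (fun s hs => hCU (mem_cl_face1 hΔx hΔt hδ0 hδ hδΔ hs))
  have hQ2c : ContinuousOn (fun s : ℝ => q ((1 - s) * (δ * Δx), (1 + s) * (Δt / 2)))
      (Set.Icc 0 1) :=
    hq.continuousOn.comp (Continuous.continuousOn (by continuity))
      (fun s hs => hCU (mem_cl_face2 hΔx hΔt hδ0 hδ hδΔ hs))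
  have hG1 : ContinuousOn (fun s : ℝ => g (s * (δ * Δx), s * (Δt / 2))) (Set.Icc 0 1) :=
    hg.comp (Continuous.continuousOn (by continuity))
      (fun s hs => face1_mem_frontier hΔx hΔt hδ0 hs)
  have hG2 : ContinuousOn (fun s : ℝ => g ((1 - s) * (δ * Δx), (1 + s) * (Δt / 2)))
      (Set.Icc 0 1) :=
    hg.comp (Continuous.continuousOn (by continuity))
      (fun s hs => face2_mem_frontier hΔx hΔt hδ0 hs)
  have hpair_split := pairPlus_split Δx Δt δ q g hQ1 hG1 hQ2c hG2
  have hpair_nn := pairPlus_nonneg hΔx hδ0 hδΔ (fun p => (q p - g p) ^ 2)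
    (fun p => sq_nonneg _)
  have hQ2val : pairPlus Δx Δt δ (fun p => (q p) ^ 2)
      = (∫ s in (0:ℝ)..1, (q (s * (δ * Δx), s * (Δt / 2))) ^ 2) * (Δt / 2 - δ * Δx)
        + (∫ s in (0:ℝ)..1, (q ((1 - s) * (δ * Δx), (1 + s) * (Δt / 2))) ^ 2)
            * (Δt / 2 + δ * Δx) := by
    simp only [pairPlus]
    rw [intervalIntegral.integral_mul_const, intervalIntegral.integral_mul_const]
  linarith [hvar, hJt, hJx, hIdiv, hQ2val, hpair_split, hpair_nn, husq, husq_nn]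
end

section
/- (Energy inequality on a sliver element.) Assume in addition that δΔx ≤ Δt/2. Let g be a C¹ function on a neighbourhood of the closure of the sliver S and let p be continuous on the two left faces of S. If the tested variational identity −∬_S g(∂_t g + ∂_x g) dx dt + {g²}⁺ + {g·p}⁻ = 0 holds, then {g²}⁺ + {p²}⁻ ≤ 0. -/
open MeasureTheory

/-- The two left faces of the sliver `S`, i.e. the segments joining `(0,0)` to
`(−δΔx, Δt/2)` and `(−δΔx, Δt/2)` to `(0, Δt)`. -/
def leftFaces (Δx Δt δ : ℝ) : Set (ℝ × ℝ) :=
  ((fun s : ℝ => (-(s * (δ * Δx)), s * (Δt / 2))) '' Set.Icc (0:ℝ) 1) ∪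
  ((fun s : ℝ => (-((1 - s) * (δ * Δx)), (1 + s) * (Δt / 2))) '' Set.Icc (0:ℝ) 1)

open Set

set_option linter.unusedVariables false

noncomputable def sliverL (Δx Δt δ : ℝ) : ℝ × ℝ →L[ℝ] ℝ × ℝ :=
  LinearMap.toContinuousLinearMap (Matrix.toLin (Module.Basis.finTwoProd ℝ) (Module.Basis.finTwoProd ℝ)
    !![δ * Δx, -(δ * Δx); Δt / 2, Δt / 2])

lemma sliverL_apply (Δx Δt δ : ℝ) (q : ℝ × ℝ) :
    sliverL Δx Δt δ q
      = (δ * Δx * q.1 + -(δ * Δx) * q.2, Δt / 2 * q.1 + Δt / 2 * q.2) := by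
  simp [sliverL]

lemma sliverL_det (Δx Δt δ : ℝ) :
    (sliverL Δx Δt δ).det = 2 * (δ * Δx) * (Δt / 2) := by
  simp only [sliverL, LinearMap.det_toContinuousLinearMap, LinearMap.det_toLin,
    Matrix.det_fin_two_of]
  ring

lemma sliver_eq_image (Δx Δt δ : ℝ) (hΔx : 0 < Δx) (hΔt : 0 < Δt) (hδ0 : 0 < δ) :
    sliverSet Δx Δt δ = sliverL Δx Δt δ '' (Ioo (0:ℝ) 1 ×ˢ Ioo (0:ℝ) 1) := by
  have ha : 0 < δ * Δx := mul_pos hδ0 hΔx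
  have hb : 0 < Δt / 2 := by positivity
  ext z
  constructor
  · intro hz
    have hz' : |z.1| * (Δt / 2) + |z.2 - Δt / 2| * (δ * Δx) < δ * Δx * (Δt / 2) := hz
    have h1 : z.1 * (Δt / 2) ≤ |z.1| * (Δt / 2) :=
      mul_le_mul_of_nonneg_right (le_abs_self _) hb.le
    have h2 : -(z.1 * (Δt / 2)) ≤ |z.1| * (Δt / 2) := by
      have := mul_le_mul_of_nonneg_right (neg_abs_le z.1) hb.le; linarith
    have h3 : (z.2 - Δt / 2) * (δ * Δx) ≤ |z.2 - Δt / 2| * (δ * Δx) :=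
      mul_le_mul_of_nonneg_right (le_abs_self _) ha.le
    have h4 : -((z.2 - Δt / 2) * (δ * Δx)) ≤ |z.2 - Δt / 2| * (δ * Δx) := by
      have := mul_le_mul_of_nonneg_right (neg_abs_le (z.2 - Δt / 2)) ha.le; linarith
    refine ⟨((z.1 * (Δt / 2) + z.2 * (δ * Δx)) / (2 * (δ * Δx) * (Δt / 2)),
      (z.2 * (δ * Δx) - z.1 * (Δt / 2)) / (2 * (δ * Δx) * (Δt / 2))), ⟨⟨?_, ?_⟩, ?_, ?_⟩, ?_⟩
    · exact div_pos (by nlinarith) (by positivity)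
    · exact (div_lt_one (by positivity)).2 (by nlinarith)
    · exact div_pos (by nlinarith) (by positivity)
    · exact (div_lt_one (by positivity)).2 (by nlinarith)
    · rw [sliverL_apply]
      have hz2 : z = (z.1, z.2) := rfl
      rw [hz2]
      simp only [Prod.mk.injEq]
      constructor <;> · field_simp; ring
  · rintro ⟨⟨u, v⟩, ⟨⟨hu0, hu1⟩, hv0, hv1⟩, rfl⟩
    have key : |u - v| + |u + v - 1| < 1 := by
      rcases abs_cases (u - v) with ⟨e1, _⟩ | ⟨e1, _⟩ <;>
        rcases abs_cases (u + v - 1) with ⟨e2, _⟩ | ⟨e2, _⟩ <;> rw [e1, e2] <;> linarith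
    show |(sliverL Δx Δt δ (u, v)).1| * (Δt / 2)
        + |(sliverL Δx Δt δ (u, v)).2 - Δt / 2| * (δ * Δx) < δ * Δx * (Δt / 2)
    rw [sliverL_apply]
    have e1 : δ * Δx * u + -(δ * Δx) * v = (δ * Δx) * (u - v) := by ring
    have e2 : Δt / 2 * u + Δt / 2 * v - Δt / 2 = (Δt / 2) * (u + v - 1) := by ring
    simp only
    rw [e1, e2, abs_mul (δ * Δx), abs_mul (Δt / 2), abs_of_pos ha, abs_of_pos hb]
    nlinarith [abs_nonneg (u - v), abs_nonneg (u + v - 1), mul_pos ha hb]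

lemma sliverL_image_Icc_subset (Δx Δt δ : ℝ) (hΔx : 0 < Δx) (hΔt : 0 < Δt) (hδ0 : 0 < δ) :
    sliverL Δx Δt δ '' (Icc (0:ℝ) 1 ×ˢ Icc (0:ℝ) 1) ⊆ closure (sliverSet Δx Δt δ) := by
  have h1 : (Icc (0:ℝ) 1 ×ˢ Icc (0:ℝ) 1) = closure (Ioo (0:ℝ) 1 ×ˢ Ioo (0:ℝ) 1) := by
    rw [closure_prod_eq, closure_Ioo (zero_ne_one)]
  rw [sliver_eq_image Δx Δt δ hΔx hΔt hδ0, h1]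
  exact image_closure_subset_closure_image (sliverL Δx Δt δ).continuous

lemma aux_ae_eq :
    (Ioo (0:ℝ) 1 ×ˢ Ioo (0:ℝ) 1 : Set (ℝ × ℝ)) =ᵐ[volume]
      (Icc (0:ℝ) 1 ×ˢ Icc (0:ℝ) 1 : Set (ℝ × ℝ)) := by
  rw [MeasureTheory.ae_eq_set]
  constructor
  · rw [Set.diff_eq_empty.mpr (Set.prod_mono Ioo_subset_Icc_self Ioo_subset_Icc_self)]
    exact measure_empty
  · apply measure_mono_null
      (t := (({0, 1} : Set ℝ) ×ˢ (univ : Set ℝ)) ∪ ((univ : Set ℝ) ×ˢ ({0, 1} : Set ℝ)))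
    · rintro ⟨x, y⟩ ⟨⟨hx, hy⟩, hn⟩
      simp only [mem_prod, mem_Ioo] at hn
      rcases eq_or_lt_of_le hx.1 with h | h
      · exact Or.inl ⟨by simp only [mem_insert_iff, mem_singleton_iff]; exact Or.inl h.symm, trivial⟩
      rcases eq_or_lt_of_le hx.2 with h2 | h2
      · exact Or.inl ⟨by simp only [mem_insert_iff, mem_singleton_iff]; exact Or.inr h2, trivial⟩
      rcases eq_or_lt_of_le hy.1 with h3 | h3
      · exact Or.inr ⟨trivial, by simp only [mem_insert_iff, mem_singleton_iff]; exact Or.inl h3.symm⟩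
      rcases eq_or_lt_of_le hy.2 with h4 | h4
      · exact Or.inr ⟨trivial, by simp only [mem_insert_iff, mem_singleton_iff]; exact Or.inr h4⟩
      exact absurd ⟨⟨h, h2⟩, h3, h4⟩ hn
    · apply measure_union_null
      · rw [Measure.volume_eq_prod, Measure.prod_prod]
        have : volume ({0, 1} : Set ℝ) = 0 :=
          ((Set.finite_singleton (1:ℝ)).insert 0).measure_zero volume
        rw [this, zero_mul]
      · rw [Measure.volume_eq_prod, Measure.prod_prod]
        have : volume ({0, 1} : Set ℝ) = 0 :=
          ((Set.finite_singleton (1:ℝ)).insert 0).measure_zero volume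
        rw [this, mul_zero]

lemma clm_split (D : ℝ × ℝ →L[ℝ] ℝ) (c d : ℝ) : D (c, d) = c * D (1, 0) + d * D (0, 1) := by
  have h : ((c, d) : ℝ × ℝ) = c • ((1 : ℝ), (0 : ℝ)) + d • ((0 : ℝ), (1 : ℝ)) := by
    simp [Prod.ext_iff]
  rw [h, map_add, D.map_smul, D.map_smul, smul_eq_mul, smul_eq_mul]

lemma divergence_sliver (Δx Δt δ : ℝ) (hΔx : 0 < Δx) (hΔt : 0 < Δt) (hδ0 : 0 < δ)
    (F : ℝ × ℝ → ℝ) (U : Set (ℝ × ℝ)) (hU : IsOpen U)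
    (hSU : closure (sliverSet Δx Δt δ) ⊆ U) (hF : ContDiffOn ℝ 1 F U) :
    ∫ z in sliverSet Δx Δt δ, (dX F z + dT F z)
      = pairPlus Δx Δt δ F + pairMinus Δx Δt δ F := by
  have ha : 0 < δ * Δx := mul_pos hδ0 hΔx
  have hb : 0 < Δt / 2 := by positivity
  set L := sliverL Δx Δt δ with hLdef
  have himg : sliverSet Δx Δt δ = L '' (Ioo (0:ℝ) 1 ×ˢ Ioo (0:ℝ) 1) :=
    sliver_eq_image Δx Δt δ hΔx hΔt hδ0
  have hIccU : ∀ q ∈ Icc ((0:ℝ), (0:ℝ)) ((1:ℝ), (1:ℝ)), L q ∈ U := by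
    intro q hq
    apply hSU
    apply sliverL_image_Icc_subset Δx Δt δ hΔx hΔt hδ0
    exact mem_image_of_mem _ (by rwa [Icc_prod_eq] at hq)
  have hdiffat : ∀ q ∈ Icc ((0:ℝ), (0:ℝ)) ((1:ℝ), (1:ℝ)), DifferentiableAt ℝ F (L q) :=
    fun q hq => (hF.contDiffAt (hU.mem_nhds (hIccU q hq))).differentiableAt one_ne_zero
  set f : ℝ × ℝ → ℝ := fun q => (δ * Δx + Δt / 2) • F (L q) with hfdef
  set k : ℝ × ℝ → ℝ := fun q => (δ * Δx - Δt / 2) • F (L q) with hkdef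
  set f' : ℝ × ℝ → ℝ × ℝ →L[ℝ] ℝ :=
    fun q => (δ * Δx + Δt / 2) • ((fderiv ℝ F (L q)).comp L) with hf'def
  set k' : ℝ × ℝ → ℝ × ℝ →L[ℝ] ℝ :=
    fun q => (δ * Δx - Δt / 2) • ((fderiv ℝ F (L q)).comp L) with hk'def
  have hle : ((0:ℝ), (0:ℝ)) ≤ ((1:ℝ), (1:ℝ)) := Prod.mk_le_mk.2 ⟨zero_le_one, zero_le_one⟩
  have hIoosub : (Ioo (0:ℝ) 1 ×ˢ Ioo (0:ℝ) 1 : Set (ℝ × ℝ))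
      ⊆ Icc ((0:ℝ), (0:ℝ)) ((1:ℝ), (1:ℝ)) := by
    rw [Icc_prod_eq]
    exact Set.prod_mono Ioo_subset_Icc_self Ioo_subset_Icc_self
  have Hdf : ∀ x ∈ (Ioo (0:ℝ) 1 ×ˢ Ioo (0:ℝ) 1 : Set (ℝ × ℝ)) \ ∅,
      HasFDerivAt f (f' x) x := by
    intro x hx
    exact ((hdiffat x (hIoosub hx.1)).hasFDerivAt.comp x L.hasFDerivAt).const_smul (δ * Δx + Δt / 2)
  have Hdk : ∀ x ∈ (Ioo (0:ℝ) 1 ×ˢ Ioo (0:ℝ) 1 : Set (ℝ × ℝ)) \ ∅,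
      HasFDerivAt k (k' x) x := by
    intro x hx
    exact ((hdiffat x (hIoosub hx.1)).hasFDerivAt.comp x L.hasFDerivAt).const_smul (δ * Δx - Δt / 2)
  have hFLcont : ContinuousOn (fun q => F (L q)) (Icc ((0:ℝ), (0:ℝ)) ((1:ℝ), (1:ℝ))) :=
    hF.continuousOn.comp L.continuous.continuousOn hIccU
  have hfc : ContinuousOn f (Icc ((0:ℝ), (0:ℝ)) ((1:ℝ), (1:ℝ))) := hFLcont.const_smul (δ * Δx + Δt / 2)
  have hkc : ContinuousOn k (Icc ((0:ℝ), (0:ℝ)) ((1:ℝ), (1:ℝ))) := hFLcont.const_smul (δ * Δx - Δt / 2)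
  have hdercont : ContinuousOn (fun q => fderiv ℝ F (L q))
      (Icc ((0:ℝ), (0:ℝ)) ((1:ℝ), (1:ℝ))) :=
    (hF.continuousOn_fderiv_of_isOpen hU le_rfl).comp L.continuous.continuousOn hIccU
  have Hi : IntegrableOn (fun x => f' x (1, 0) + k' x (0, 1))
      (Icc ((0:ℝ), (0:ℝ)) ((1:ℝ), (1:ℝ))) := by
    apply ContinuousOn.integrableOn_compact isCompact_Icc
    apply ContinuousOn.add
    · exact (((hdercont.clm_comp (continuousOn_const (c := L))).const_smul (δ * Δx + Δt / 2)).clm_apply continuousOn_const)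
    · exact (((hdercont.clm_comp (continuousOn_const (c := L))).const_smul (δ * Δx - Δt / 2)).clm_apply continuousOn_const)
  have H := integral_divergence_prod_Icc_of_hasFDerivAt_off_countable_of_le
    f k f' k' ((0:ℝ), (0:ℝ)) ((1:ℝ), (1:ℝ)) hle ∅ countable_empty hfc hkc Hdf Hdk Hi
  have hL10 : L ((1:ℝ), (0:ℝ)) = (δ * Δx, Δt / 2) := by
    rw [hLdef, sliverL_apply]; norm_num
  have hL01 : L ((0:ℝ), (1:ℝ)) = (-(δ * Δx), Δt / 2) := by
    rw [hLdef, sliverL_apply]; norm_num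
  have hpt : ∀ x : ℝ × ℝ, L x ∈ U →
      f' x (1, 0) + k' x (0, 1) = (2 * (δ * Δx) * (Δt / 2)) * (dX F (L x) + dT F (L x)) := by
    intro x hx
    simp only [hf'def, hk'def, ContinuousLinearMap.smul_apply,
      ContinuousLinearMap.comp_apply, smul_eq_mul]
    rw [hL10, hL01, clm_split (fderiv ℝ F (L x)) (δ * Δx) (Δt / 2),
      clm_split (fderiv ℝ F (L x)) (-(δ * Δx)) (Δt / 2)]
    unfold dX dT
    ring
  have hmeasIoo : MeasurableSet (Ioo (0:ℝ) 1 ×ˢ Ioo (0:ℝ) 1 : Set (ℝ × ℝ)) :=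
    (isOpen_Ioo.prod isOpen_Ioo).measurableSet
  have hinj : InjOn L (Ioo (0:ℝ) 1 ×ˢ Ioo (0:ℝ) 1) := by
    rintro ⟨q1, q2⟩ _ ⟨r1, r2⟩ _ hqr
    rw [hLdef, sliverL_apply, sliverL_apply] at hqr
    simp only [Prod.mk.injEq] at hqr ⊢
    have e1 : q1 - q2 = r1 - r2 :=
      mul_left_cancel₀ (ne_of_gt ha) (by linear_combination hqr.1)
    have e2 : q1 + q2 = r1 + r2 :=
      mul_left_cancel₀ (ne_of_gt hb) (by linear_combination hqr.2)
    constructor <;> linarith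
  have hCoV : ∫ z in L '' (Ioo (0:ℝ) 1 ×ˢ Ioo (0:ℝ) 1), (dX F z + dT F z)
      = ∫ x in Ioo (0:ℝ) 1 ×ˢ Ioo (0:ℝ) 1,
          |(L : ℝ × ℝ →L[ℝ] ℝ × ℝ).det| • (dX F (L x) + dT F (L x)) :=
    integral_image_eq_integral_abs_det_fderiv_smul volume hmeasIoo
      (fun x _ => L.hasFDerivAt.hasFDerivWithinAt) hinj _
  have h2ab : (0:ℝ) < 2 * (δ * Δx) * (Δt / 2) := by positivity
  have hdet : |(L : ℝ × ℝ →L[ℝ] ℝ × ℝ).det| = 2 * (δ * Δx) * (Δt / 2) := by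
    rw [hLdef, sliverL_det]; exact abs_of_pos h2ab
  have hIccprod : (Icc ((0:ℝ), (0:ℝ)) ((1:ℝ), (1:ℝ)) : Set (ℝ × ℝ))
      = Icc (0:ℝ) 1 ×ˢ Icc (0:ℝ) 1 := Icc_prod_eq _ _
  have ek1 : (∫ x in (0:ℝ)..1, k (x, 1))
      = -(∫ s in (0:ℝ)..1, F (-((1 - s) * (δ * Δx)), (1 + s) * (Δt / 2)) * (Δt / 2 - δ * Δx)) := by
    rw [← intervalIntegral.integral_neg]
    apply intervalIntegral.integral_congr
    intro s _
    have hLs : L (s, 1) = (-((1 - s) * (δ * Δx)), (1 + s) * (Δt / 2)) := by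
      rw [hLdef, sliverL_apply]; simp only [Prod.mk.injEq]; constructor <;> ring
    simp only [hkdef]
    rw [hLs, smul_eq_mul]
    ring
  have ek0 : (∫ x in (0:ℝ)..1, k (x, 0))
      = -(∫ s in (0:ℝ)..1, F (s * (δ * Δx), s * (Δt / 2)) * (Δt / 2 - δ * Δx)) := by
    rw [← intervalIntegral.integral_neg]
    apply intervalIntegral.integral_congr
    intro s _
    have hLs : L (s, 0) = (s * (δ * Δx), s * (Δt / 2)) := by
      rw [hLdef, sliverL_apply]; simp only [Prod.mk.injEq]; constructor <;> ring
    simp only [hkdef]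
    rw [hLs, smul_eq_mul]
    ring
  have ef1 : (∫ y in (0:ℝ)..1, f (1, y))
      = ∫ s in (0:ℝ)..1, F ((1 - s) * (δ * Δx), (1 + s) * (Δt / 2)) * (Δt / 2 + δ * Δx) := by
    apply intervalIntegral.integral_congr
    intro s _
    have hLs : L (1, s) = ((1 - s) * (δ * Δx), (1 + s) * (Δt / 2)) := by
      rw [hLdef, sliverL_apply]; simp only [Prod.mk.injEq]; constructor <;> ring
    simp only [hfdef]
    rw [hLs, smul_eq_mul]
    ring
  have ef0 : (∫ y in (0:ℝ)..1, f (0, y))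
      = ∫ s in (0:ℝ)..1, F (-(s * (δ * Δx)), s * (Δt / 2)) * (Δt / 2 + δ * Δx) := by
    apply intervalIntegral.integral_congr
    intro s _
    have hLs : L (0, s) = (-(s * (δ * Δx)), s * (Δt / 2)) := by
      rw [hLdef, sliverL_apply]; simp only [Prod.mk.injEq]; constructor <;> ring
    simp only [hfdef]
    rw [hLs, smul_eq_mul]
    ring
  calc ∫ z in sliverSet Δx Δt δ, (dX F z + dT F z)
      = ∫ x in Ioo (0:ℝ) 1 ×ˢ Ioo (0:ℝ) 1,
          |(L : ℝ × ℝ →L[ℝ] ℝ × ℝ).det| • (dX F (L x) + dT F (L x)) := by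
        rw [himg]; exact hCoV
    _ = ∫ x in Ioo (0:ℝ) 1 ×ˢ Ioo (0:ℝ) 1, (f' x (1, 0) + k' x (0, 1)) := by
        apply setIntegral_congr_fun hmeasIoo
        intro x hx
        have hxU : L x ∈ U := by
          apply hSU
          apply subset_closure
          rw [himg]
          exact mem_image_of_mem _ hx
        rw [hdet]
        simp only [smul_eq_mul]
        exact (hpt x hxU).symm
    _ = ∫ x in Icc ((0:ℝ), (0:ℝ)) ((1:ℝ), (1:ℝ)), (f' x (1, 0) + k' x (0, 1)) := by
        rw [hIccprod]
        exact setIntegral_congr_set aux_ae_eq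
    _ = (((∫ x in (0:ℝ)..1, k (x, 1)) - ∫ x in (0:ℝ)..1, k (x, 0))
          + ∫ y in (0:ℝ)..1, f (1, y)) - ∫ y in (0:ℝ)..1, f (0, y) := H
    _ = pairPlus Δx Δt δ F + pairMinus Δx Δt δ F := by
        rw [ek1, ek0, ef1, ef0]
        unfold pairPlus pairMinus
        ring

/-- Energy inequality on a sliver element.  Assume `δΔx ≤ Δt/2`.  If `g` is `C¹`
on a neighbourhood of the closure of the sliver `S`, `p` is continuous on the
two left faces of `S`, and the tested variational identity
`−∬_S g(∂ₜg + ∂ₓg) dx dt + {g²}⁺ + {g·p}⁻ = 0` holds, then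
`{g²}⁺ + {p²}⁻ ≤ 0`. -/
theorem energy_inequality_sliver (Δx Δt δ : ℝ)
    (hΔx : 0 < Δx) (hΔt : 0 < Δt) (hδ0 : 0 < δ) (hδ : δ ≤ 1 / 2)
    (hδΔ : δ * Δx ≤ Δt / 2)
    (g : ℝ × ℝ → ℝ) (U : Set (ℝ × ℝ)) (hU : IsOpen U)
    (hSU : closure (sliverSet Δx Δt δ) ⊆ U) (hg : ContDiffOn ℝ 1 g U)
    (p : ℝ × ℝ → ℝ) (hp : ContinuousOn p (leftFaces Δx Δt δ))
    (hvar : -(∫ z in sliverSet Δx Δt δ, g z * (dT g z + dX g z))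
        + pairPlus Δx Δt δ (fun z => (g z) ^ 2)
        + pairMinus Δx Δt δ (fun z => g z * p z) = 0) :
    pairPlus Δx Δt δ (fun z => (g z) ^ 2)
      + pairMinus Δx Δt δ (fun z => (p z) ^ 2) ≤ 0 := by
  have ha : 0 < δ * Δx := mul_pos hδ0 hΔx
  have hb : 0 < Δt / 2 := by positivity
  have hc1n : (0:ℝ) ≤ Δt / 2 + δ * Δx := by linarith
  have hc2n : (0:ℝ) ≤ Δt / 2 - δ * Δx := by linarith
  have hopen : IsOpen (sliverSet Δx Δt δ) := by
    unfold sliverSet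
    exact isOpen_lt (Continuous.add (continuous_fst.abs.mul continuous_const)
      (((continuous_snd.sub continuous_const).abs).mul continuous_const)) continuous_const
  have hF2 : (fun z : ℝ × ℝ => (g z) ^ 2) = (fun z => g z * g z) :=
    funext fun z => pow_two (g z)
  rw [hF2] at hvar ⊢
  have hdiv := divergence_sliver Δx Δt δ hΔx hΔt hδ0 (fun z => g z * g z) U hU hSU (hg.mul hg)
  have hIhalf : ∫ z in sliverSet Δx Δt δ,
        (dX (fun z => g z * g z) z + dT (fun z => g z * g z) z)
      = 2 * ∫ z in sliverSet Δx Δt δ, g z * (dT g z + dX g z) := by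
    rw [← integral_const_mul]
    apply setIntegral_congr_fun hopen.measurableSet
    intro z hz
    have hzU : z ∈ U := hSU (subset_closure hz)
    have hdg : HasFDerivAt g (fderiv ℝ g z) z :=
      ((hg.contDiffAt (hU.mem_nhds hzU)).differentiableAt one_ne_zero).hasFDerivAt
    have hdF : HasFDerivAt (fun y => g y * g y)
        (g z • fderiv ℝ g z + g z • fderiv ℝ g z) z := hdg.mul hdg
    have hfd := hdF.fderiv
    show fderiv ℝ (fun y => g y * g y) z (1, 0) + fderiv ℝ (fun y => g y * g y) z (0, 1)
      = 2 * (g z * (fderiv ℝ g z (0, 1) + fderiv ℝ g z (1, 0)))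
    rw [hfd]
    simp only [ContinuousLinearMap.add_apply, ContinuousLinearMap.smul_apply, smul_eq_mul]
    ring
  -- face 1 data
  have hcont1 : Continuous (fun s : ℝ => ((-(s * (δ * Δx)), s * (Δt / 2)) : ℝ × ℝ)) := by
    fun_prop
  have hker1 : ∀ s ∈ Icc (0:ℝ) 1,
      ((-(s * (δ * Δx)), s * (Δt / 2)) : ℝ × ℝ) ∈ closure (sliverSet Δx Δt δ) := by
    intro s hs
    apply sliverL_image_Icc_subset Δx Δt δ hΔx hΔt hδ0
    refine ⟨(0, s), ⟨⟨le_rfl, zero_le_one⟩, hs⟩, ?_⟩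
    rw [sliverL_apply]; simp only [Prod.mk.injEq]; constructor <;> ring
  have hg1 : ContinuousOn (fun s : ℝ => g (-(s * (δ * Δx)), s * (Δt / 2))) (Icc (0:ℝ) 1) :=
    hg.continuousOn.comp hcont1.continuousOn (fun s hs => hSU (hker1 s hs))
  have hp1 : ContinuousOn (fun s : ℝ => p (-(s * (δ * Δx)), s * (Δt / 2))) (Icc (0:ℝ) 1) :=
    hp.comp hcont1.continuousOn (fun s hs => Or.inl (mem_image_of_mem _ hs))
  -- face 2 data
  have hcont2 : Continuous (fun s : ℝ => ((-((1 - s) * (δ * Δx)), (1 + s) * (Δt / 2)) : ℝ × ℝ)) := by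
    fun_prop
  have hker2 : ∀ s ∈ Icc (0:ℝ) 1,
      ((-((1 - s) * (δ * Δx)), (1 + s) * (Δt / 2)) : ℝ × ℝ) ∈ closure (sliverSet Δx Δt δ) := by
    intro s hs
    apply sliverL_image_Icc_subset Δx Δt δ hΔx hΔt hδ0
    refine ⟨(s, 1), ⟨hs, ⟨zero_le_one, le_rfl⟩⟩, ?_⟩
    rw [sliverL_apply]; simp only [Prod.mk.injEq]; constructor <;> ring
  have hg2 : ContinuousOn (fun s : ℝ => g (-((1 - s) * (δ * Δx)), (1 + s) * (Δt / 2)))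
      (Icc (0:ℝ) 1) :=
    hg.continuousOn.comp hcont2.continuousOn (fun s hs => hSU (hker2 s hs))
  have hp2 : ContinuousOn (fun s : ℝ => p (-((1 - s) * (δ * Δx)), (1 + s) * (Δt / 2)))
      (Icc (0:ℝ) 1) :=
    hp.comp hcont2.continuousOn (fun s hs => Or.inr (mem_image_of_mem _ hs))
  have hu : uIcc (0:ℝ) 1 = Icc (0:ℝ) 1 := uIcc_of_le zero_le_one
  -- integrability, face 1
  have iA1 : IntervalIntegrable
      (fun s : ℝ => g (-(s * (δ * Δx)), s * (Δt / 2)) * g (-(s * (δ * Δx)), s * (Δt / 2))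
        * (Δt / 2 + δ * Δx)) volume 0 1 :=
    ContinuousOn.intervalIntegrable (by rw [hu]; exact (hg1.mul hg1).mul continuousOn_const)
  have iB1 : IntervalIntegrable
      (fun s : ℝ => g (-(s * (δ * Δx)), s * (Δt / 2)) * p (-(s * (δ * Δx)), s * (Δt / 2))
        * (Δt / 2 + δ * Δx)) volume 0 1 :=
    ContinuousOn.intervalIntegrable (by rw [hu]; exact (hg1.mul hp1).mul continuousOn_const)
  have iC1 : IntervalIntegrable
      (fun s : ℝ => (p (-(s * (δ * Δx)), s * (Δt / 2))) ^ 2 * (Δt / 2 + δ * Δx)) volume 0 1 :=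
    ContinuousOn.intervalIntegrable (by rw [hu]; exact (hp1.pow 2).mul continuousOn_const)
  have iA2 : IntervalIntegrable
      (fun s : ℝ => g (-((1 - s) * (δ * Δx)), (1 + s) * (Δt / 2))
        * g (-((1 - s) * (δ * Δx)), (1 + s) * (Δt / 2)) * (Δt / 2 - δ * Δx)) volume 0 1 :=
    ContinuousOn.intervalIntegrable (by rw [hu]; exact (hg2.mul hg2).mul continuousOn_const)
  have iB2 : IntervalIntegrable
      (fun s : ℝ => g (-((1 - s) * (δ * Δx)), (1 + s) * (Δt / 2))
        * p (-((1 - s) * (δ * Δx)), (1 + s) * (Δt / 2)) * (Δt / 2 - δ * Δx)) volume 0 1 :=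
    ContinuousOn.intervalIntegrable (by rw [hu]; exact (hg2.mul hp2).mul continuousOn_const)
  have iC2 : IntervalIntegrable
      (fun s : ℝ => (p (-((1 - s) * (δ * Δx)), (1 + s) * (Δt / 2))) ^ 2 * (Δt / 2 - δ * Δx))
        volume 0 1 :=
    ContinuousOn.intervalIntegrable (by rw [hu]; exact (hp2.pow 2).mul continuousOn_const)
  -- split identities per face
  have A1 : ∫ s in (0:ℝ)..1,
        (g (-(s * (δ * Δx)), s * (Δt / 2)) - p (-(s * (δ * Δx)), s * (Δt / 2))) ^ 2
          * (Δt / 2 + δ * Δx)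
      = (∫ s in (0:ℝ)..1, g (-(s * (δ * Δx)), s * (Δt / 2))
            * g (-(s * (δ * Δx)), s * (Δt / 2)) * (Δt / 2 + δ * Δx))
        - 2 * (∫ s in (0:ℝ)..1, g (-(s * (δ * Δx)), s * (Δt / 2))
            * p (-(s * (δ * Δx)), s * (Δt / 2)) * (Δt / 2 + δ * Δx))
        + ∫ s in (0:ℝ)..1, (p (-(s * (δ * Δx)), s * (Δt / 2))) ^ 2 * (Δt / 2 + δ * Δx) := by
    rw [← intervalIntegral.integral_const_mul, ← intervalIntegral.integral_sub iA1
      (iB1.const_mul 2), ← intervalIntegral.integral_add (iA1.sub (iB1.const_mul 2)) iC1]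
    apply intervalIntegral.integral_congr
    intro s _
    ring
  have A2 : ∫ s in (0:ℝ)..1,
        (g (-((1 - s) * (δ * Δx)), (1 + s) * (Δt / 2))
          - p (-((1 - s) * (δ * Δx)), (1 + s) * (Δt / 2))) ^ 2 * (Δt / 2 - δ * Δx)
      = (∫ s in (0:ℝ)..1, g (-((1 - s) * (δ * Δx)), (1 + s) * (Δt / 2))
            * g (-((1 - s) * (δ * Δx)), (1 + s) * (Δt / 2)) * (Δt / 2 - δ * Δx))
        - 2 * (∫ s in (0:ℝ)..1, g (-((1 - s) * (δ * Δx)), (1 + s) * (Δt / 2))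
            * p (-((1 - s) * (δ * Δx)), (1 + s) * (Δt / 2)) * (Δt / 2 - δ * Δx))
        + ∫ s in (0:ℝ)..1, (p (-((1 - s) * (δ * Δx)), (1 + s) * (Δt / 2))) ^ 2
            * (Δt / 2 - δ * Δx) := by
    rw [← intervalIntegral.integral_const_mul, ← intervalIntegral.integral_sub iA2
      (iB2.const_mul 2), ← intervalIntegral.integral_add (iA2.sub (iB2.const_mul 2)) iC2]
    apply intervalIntegral.integral_congr
    intro s _
    ring
  have hMsplit : pairMinus Δx Δt δ (fun z => (g z - p z) ^ 2)
      = pairMinus Δx Δt δ (fun z => g z * g z)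
        - 2 * pairMinus Δx Δt δ (fun z => g z * p z)
        + pairMinus Δx Δt δ (fun z => (p z) ^ 2) := by
    simp only [pairMinus]
    rw [A1, A2]
    ring
  have N1 : 0 ≤ ∫ s in (0:ℝ)..1,
      (g (-(s * (δ * Δx)), s * (Δt / 2)) - p (-(s * (δ * Δx)), s * (Δt / 2))) ^ 2
        * (Δt / 2 + δ * Δx) :=
    intervalIntegral.integral_nonneg zero_le_one
      (fun s _ => mul_nonneg (sq_nonneg _) hc1n)
  have N2 : 0 ≤ ∫ s in (0:ℝ)..1,
      (g (-((1 - s) * (δ * Δx)), (1 + s) * (Δt / 2))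
        - p (-((1 - s) * (δ * Δx)), (1 + s) * (Δt / 2))) ^ 2 * (Δt / 2 - δ * Δx) :=
    intervalIntegral.integral_nonneg zero_le_one
      (fun s _ => mul_nonneg (sq_nonneg _) hc2n)
  have hMq : pairMinus Δx Δt δ (fun z => (g z - p z) ^ 2) ≤ 0 := by
    simp only [pairMinus]
    linarith [N1, N2]
  linarith [hvar, hdiv, hIhalf, hMsplit, hMq]
end

section
/- (Energy inequality on the control volume to the left of a sliver.) Let q be a C¹ function on a neighbourhood of the closure of C⁻, let u be continuous on [−Δx,0], and let w be continuous on [0,Δt] (the inflow trace on the vertical interface x = −Δx). If the tested variational identity ∫_{−Δx}^{0} q(x,Δt)² dx − ∫_{−Δx}^{0} q(x,0)u(x) dx − ∬_{C⁻} q(∂_t q + ∂_x q) dx dt − {q²}⁻ − ∫₀^{Δt} q(−Δx,t) w(t) dt = 0 holds, then ∫_{−Δx}^{0} q(x,Δt)² dx − ∫_{−Δx}^{0} u(x)² dx − {q²}⁻ − ∫₀^{Δt} w(t)² dt ≤ 0. -/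
open MeasureTheory

/-- the "thick" control volume: rectangle minus the *open* sliver. -/
def Mset (Δx Δt δ : ℝ) : Set (ℝ × ℝ) := (Set.Ioo (-Δx) 0 ×ˢ Set.Ioo 0 Δt) \ sliverSet Δx Δt δ

noncomputable def t1 (Δx Δt δ : ℝ) (x : ℝ) : ℝ := min (-x * Δt / (2 * (δ * Δx))) (Δt / 2)
noncomputable def bb (Δx Δt δ : ℝ) (t : ℝ) : ℝ := δ * Δx - 2 * (δ * Δx) / Δt * |t - Δt / 2|

section
variable (Δx Δt δ : ℝ)

lemma closure_sliver_subset :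
    closure (sliverSet Δx Δt δ) ⊆ {p : ℝ × ℝ | |p.1| * (Δt / 2) + |p.2 - Δt / 2| * (δ * Δx) ≤ δ * Δx * (Δt/2)} := by
  apply closure_minimal
  · exact Set.setOf_subset_setOf.mpr (fun p => le_of_lt)
  · apply isClosed_le _ continuous_const
    fun_prop

/-- every point of the closed rectangle outside the open sliver is in `closure Cminus`. -/
lemma key_subset (hΔx : 0 < Δx) (hΔt : 0 < Δt) (hδ0 : 0 < δ) (hδ : δ ≤ 1/2) :
    (Set.Icc (-Δx) 0 ×ˢ Set.Icc 0 Δt) \ sliverSet Δx Δt δ ⊆ closure (Cminus Δx Δt δ) := by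
  have ha : 0 < δ * Δx := mul_pos hδ0 hΔx
  have haΔ : δ * Δx ≤ Δx / 2 := by nlinarith
  rintro ⟨x, t⟩ ⟨⟨⟨hx1, hx2⟩, ht1, ht2⟩, hS⟩
  simp only [Set.mem_Icc] at hx1 hx2 ht1 ht2
  have hg : δ * Δx * (Δt/2) ≤ |x| * (Δt / 2) + |t - Δt / 2| * (δ * Δx) := not_lt.mp hS
  set F : ℝ → ℝ × ℝ := fun ε => ((1-ε)*x - (3/2)*ε*(δ*Δx), (1-ε)*t + ε*(Δt/2)) with hF
  have hFc : Filter.Tendsto F (nhdsWithin 0 (Set.Ioi 0)) (nhds (x, t)) := by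
    have hc : Continuous F := by fun_prop
    have h0 : F 0 = (x, t) := by simp [hF]
    exact h0 ▸ (hc.tendsto 0).mono_left nhdsWithin_le_nhds
  have hmem : ∀ᶠ ε in nhdsWithin 0 (Set.Ioi 0), F ε ∈ Cminus Δx Δt δ := by
    filter_upwards [Ioo_mem_nhdsGT_of_mem (by norm_num : (0:ℝ) ∈ Set.Ico 0 1)] with ε hε
    obtain ⟨hε0, hε1⟩ := hε
    refine ⟨⟨Set.mem_Ioo.mpr ⟨?_, ?_⟩, Set.mem_Ioo.mpr ⟨?_, ?_⟩⟩, ?_⟩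
    · show -Δx < (1-ε)*x - (3/2)*ε*(δ*Δx); nlinarith
    · show (1-ε)*x - (3/2)*ε*(δ*Δx) < 0; nlinarith
    · show 0 < (1-ε)*t + ε*(Δt/2); nlinarith
    · show (1-ε)*t + ε*(Δt/2) < Δt; nlinarith
    · intro hcl
      have h2 := closure_sliver_subset Δx Δt δ hcl
      simp only [Set.mem_setOf_eq] at h2
      have e1 : |(1-ε)*x - (3/2)*ε*(δ*Δx)| = (1-ε)*|x| + (3/2)*ε*(δ*Δx) := by
        rw [abs_of_nonpos (by nlinarith), abs_of_nonpos hx2]; ring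
      have e2 : |(1-ε)*t + ε*(Δt/2) - Δt/2| = (1-ε)*|t - Δt/2| := by
        rw [show (1-ε)*t + ε*(Δt/2) - Δt/2 = (1-ε)*(t - Δt/2) by ring,
          abs_mul, abs_of_nonneg (by linarith)]
      rw [e1, e2] at h2
      nlinarith [mul_le_mul_of_nonneg_left hg (by linarith : (0:ℝ) ≤ 1-ε),
        mul_pos (mul_pos hε0 ha) hΔt]
  exact mem_closure_of_tendsto hFc hmem

end
section
variable (Δx Δt δ : ℝ)

lemma null_boundary (hΔx : 0 < Δx) (hΔt : 0 < Δt) (hδ0 : 0 < δ) :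
    volume {p : ℝ × ℝ | |p.1| * (Δt / 2) + |p.2 - Δt / 2| * (δ * Δx) = δ * Δx * (Δt/2)} = 0 := by
  have ha : 0 < δ * Δx := mul_pos hδ0 hΔx
  set Z := {p : ℝ × ℝ | |p.1| * (Δt / 2) + |p.2 - Δt / 2| * (δ * Δx) = δ * Δx * (Δt/2)} with hZ
  have hmeas : MeasurableSet Z := by
    apply measurableSet_eq_fun (by fun_prop) (by fun_prop)
  rw [Measure.volume_eq_prod, Measure.prod_apply hmeas]
  have hsec : ∀ x : ℝ, volume (Prod.mk x ⁻¹' Z) = 0 := by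
    intro x
    set r : ℝ := (δ*Δx*(Δt/2) - abs x*(Δt/2))/(δ*Δx) with hr
    have hsub : Prod.mk x ⁻¹' Z ⊆ insert (Δt/2 + r) {Δt/2 - r} := by
      intro t ht
      simp only [Set.mem_preimage, hZ, Set.mem_setOf_eq] at ht
      have hteq : |t - Δt/2| = r := by
        rw [hr, eq_div_iff (ne_of_gt ha)]; linarith
      rcases abs_cases (t - Δt/2) with ⟨h1, _⟩ | ⟨h1, _⟩
      · exact Set.mem_insert_iff.mpr (Or.inl (by rw [h1] at hteq; linarith))
      · refine Set.mem_insert_iff.mpr (Or.inr ?_)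
        simp only [Set.mem_singleton_iff]
        rw [h1] at hteq; linarith
    exact measure_mono_null hsub (Set.Finite.measure_zero (Set.toFinite _) _)
  simp only [hsec]
  exact lintegral_zero

lemma Cminus_ae_eq (hΔx : 0 < Δx) (hΔt : 0 < Δt) (hδ0 : 0 < δ) :
    Cminus Δx Δt δ =ᵐ[volume] Mset Δx Δt δ := by
  rw [MeasureTheory.ae_eq_set]
  constructor
  · have : Cminus Δx Δt δ \ Mset Δx Δt δ = ∅ := by
      apply Set.diff_eq_empty.mpr
      exact Set.diff_subset_diff_right subset_closure
    simp [this]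
  · apply measure_mono_null _ (null_boundary Δx Δt δ hΔx hΔt hδ0)
    rintro p ⟨⟨_, hpS⟩, hpC⟩
    simp only [Cminus, Set.mem_diff, not_and, not_not] at hpC
    have h1 := closure_sliver_subset Δx Δt δ (hpC ‹_›)
    exact le_antisymm h1 (not_lt.mp hpS)

end
section
variable (Δx Δt δ : ℝ)

lemma t1_pos (hΔt : 0 < Δt) (hδΔx : 0 < δ * Δx) {x : ℝ} (hx : x < 0) : 0 < t1 Δx Δt δ x :=
  lt_min (div_pos (by nlinarith) (by positivity)) (by positivity)

lemma t1_le (hΔt : 0 < Δt) : t1 Δx Δt δ x ≤ Δt / 2 := min_le_right _ _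

lemma t1_nonneg (hΔx : 0 < Δx) (hΔt : 0 < Δt) (hδ0 : 0 < δ) {x : ℝ} (hx : x ≤ 0) :
    0 ≤ t1 Δx Δt δ x := by
  have ha : 0 < δ * Δx := mul_pos hδ0 hΔx
  exact le_min (div_nonneg (by nlinarith) (by positivity)) (by positivity)

lemma cont_t1 : Continuous (t1 Δx Δt δ) := by
  apply Continuous.min _ continuous_const
  fun_prop


lemma secT_mem (hΔx : 0 < Δx) (hΔt : 0 < Δt) (hδ0 : 0 < δ) {x : ℝ}
    (hx : x ∈ Set.Ioo (-Δx) 0) :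
    Prod.mk x ⁻¹' Mset Δx Δt δ
      = Set.Ioc 0 (t1 Δx Δt δ x) ∪ Set.Ico (Δt - t1 Δx Δt δ x) Δt := by
  have ha : 0 < δ * Δx := mul_pos hδ0 hΔx
  obtain ⟨hx1, hx2⟩ := hx
  ext t
  simp only [Set.mem_preimage, Mset, Set.mem_diff, Set.mem_prod, Set.mem_Ioo, sliverSet,
    Set.mem_setOf_eq, Set.mem_union, Set.mem_Ioc, Set.mem_Ico, not_lt]
  rw [abs_of_nonpos (le_of_lt hx2)]
  by_cases hcase : -x * Δt / (2*(δ*Δx)) ≤ Δt/2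
  · have ht1x : t1 Δx Δt δ x = -x * Δt / (2*(δ*Δx)) := min_eq_left hcase
    have ht1e : (δ*Δx) * t1 Δx Δt δ x = -x * (Δt/2) := by
      rw [ht1x]; field_simp
    constructor
    · rintro ⟨⟨_, ht0, htT⟩, hge⟩
      rcases abs_cases (t - Δt/2) with ⟨h1, h2⟩ | ⟨h1, h2⟩
      · right
        constructor
        · rw [h1] at hge; nlinarith
        · exact htT
      · left
        refine ⟨ht0, ?_⟩
        rw [h1] at hge; nlinarith
    · rintro (⟨ht0, htm⟩ | ⟨htm, htT⟩)
      · have htT : t < Δt := by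
          have := t1_le Δx Δt δ (x := x) hΔt; linarith
        refine ⟨⟨⟨hx1, hx2⟩, ht0, htT⟩, ?_⟩
        rcases abs_cases (t - Δt/2) with ⟨h1, h2⟩ | ⟨h1, h2⟩
        · rw [h1]; nlinarith [t1_le Δx Δt δ (x := x) hΔt]
        · rw [h1]; nlinarith
      · have ht0 : 0 < t := by
          have := t1_le Δx Δt δ (x := x) hΔt; linarith
        refine ⟨⟨⟨hx1, hx2⟩, ht0, htT⟩, ?_⟩
        rcases abs_cases (t - Δt/2) with ⟨h1, h2⟩ | ⟨h1, h2⟩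
        · rw [h1]; nlinarith
        · rw [h1]; nlinarith [t1_le Δx Δt δ (x := x) hΔt]
  · have ht1x : t1 Δx Δt δ x = Δt/2 := min_eq_right (le_of_not_ge hcase)
    push_neg at hcase
    have hxa : δ * Δx ≤ -x := by
      have h' := (lt_div_iff₀ (by positivity : (0:ℝ) < 2*(δ*Δx))).mp hcase
      nlinarith
    rw [ht1x]
    constructor
    · rintro ⟨⟨_, ht0, htT⟩, _⟩
      rcases le_total t (Δt/2) with h | h
      · exact Or.inl ⟨ht0, h⟩
      · exact Or.inr ⟨by linarith, htT⟩
    · rintro (⟨ht0, htm⟩ | ⟨htm, htT⟩)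
      · refine ⟨⟨⟨hx1, hx2⟩, ht0, by linarith⟩, ?_⟩
        nlinarith [abs_nonneg (t - Δt/2)]
      · refine ⟨⟨⟨hx1, hx2⟩, by linarith, htT⟩, ?_⟩
        nlinarith [abs_nonneg (t - Δt/2)]

lemma secT_empty {x : ℝ} (hx : x ∉ Set.Ioo (-Δx) 0) :
    Prod.mk x ⁻¹' Mset Δx Δt δ = ∅ := by
  ext t
  simp only [Set.mem_preimage, Mset, Set.mem_diff, Set.mem_prod, Set.mem_empty_iff_false,
    iff_false]
  rintro ⟨⟨hx', _⟩, _⟩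
  exact hx hx'

lemma bb_mem (hΔt : 0 < Δt) (hδΔx : 0 < δ * Δx) {t : ℝ} (ht : t ∈ Set.Ioo 0 Δt) :
    0 < bb Δx Δt δ t ∧ bb Δx Δt δ t ≤ δ * Δx := by
  obtain ⟨h1, h2⟩ := ht
  unfold bb
  constructor
  · have hlt : |t - Δt/2| < Δt/2 := abs_lt.mpr ⟨by linarith, by linarith⟩
    have hm : 2 * (δ * Δx) / Δt * |t - Δt/2| < 2 * (δ * Δx) / Δt * (Δt/2) :=
      mul_lt_mul_of_pos_left hlt (by positivity)
    have he : 2 * (δ * Δx) / Δt * (Δt/2) = δ * Δx := by field_simp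
    rw [he] at hm
    linarith
  · have : 0 ≤ 2 * (δ * Δx) / Δt * |t - Δt/2| := by positivity
    linarith

lemma secX_mem (hΔx : 0 < Δx) (hΔt : 0 < Δt) (hδ0 : 0 < δ) (hδ : δ ≤ 1/2) {t : ℝ}
    (ht : t ∈ Set.Ioo 0 Δt) :
    (fun x => (x, t)) ⁻¹' Mset Δx Δt δ = Set.Ioc (-Δx) (-(bb Δx Δt δ t)) := by
  have ha : 0 < δ * Δx := mul_pos hδ0 hΔx
  have haΔ : δ * Δx ≤ Δx / 2 := by nlinarith
  obtain ⟨hb1, hb2⟩ := bb_mem Δx Δt δ hΔt ha ht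
  obtain ⟨ht1, ht2⟩ := ht
  have hbb : (bb Δx Δt δ t) * (Δt/2) = δ * Δx * (Δt/2) - |t - Δt/2| * (δ * Δx) := by
    unfold bb; field_simp
  ext x
  simp only [Set.mem_preimage, Mset, Set.mem_diff, Set.mem_prod, Set.mem_Ioo, sliverSet,
    Set.mem_setOf_eq, Set.mem_Ioc, not_lt]
  constructor
  · rintro ⟨⟨⟨hxl, hxr⟩, _⟩, hge⟩
    rw [abs_of_nonpos (le_of_lt hxr)] at hge
    refine ⟨hxl, ?_⟩
    nlinarith
  · rintro ⟨hxl, hxr⟩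
    have hxr0 : x < 0 := lt_of_le_of_lt hxr (by linarith)
    refine ⟨⟨⟨hxl, hxr0⟩, ht1, ht2⟩, ?_⟩
    rw [abs_of_nonpos (le_of_lt hxr0)]
    nlinarith

lemma secX_empty {t : ℝ} (ht : t ∉ Set.Ioo 0 Δt) :
    (fun x => (x, t)) ⁻¹' Mset Δx Δt δ = ∅ := by
  ext x
  simp only [Set.mem_preimage, Mset, Set.mem_diff, Set.mem_prod, Set.mem_empty_iff_false,
    iff_false]
  rintro ⟨⟨_, ht'⟩, _⟩
  exact ht ht'

end
section
variable (Δx Δt δ : ℝ)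

lemma isOpen_sliver : IsOpen (sliverSet Δx Δt δ) := by
  apply isOpen_lt _ continuous_const
  fun_prop

lemma measurableSet_Mset : MeasurableSet (Mset Δx Δt δ) :=
  ((measurableSet_Ioo.prod measurableSet_Ioo).diff (isOpen_sliver Δx Δt δ).measurableSet)

lemma fubiniT (F : ℝ × ℝ → ℝ) (hΔx : 0 < Δx) (hΔt : 0 < Δt) (hδ0 : 0 < δ)
    (hi : IntegrableOn F (Mset Δx Δt δ)) :
    ∫ p in Mset Δx Δt δ, F p
      = ∫ x in Set.Ioo (-Δx) 0,
          ∫ t in Set.Ioc 0 (t1 Δx Δt δ x) ∪ Set.Ico (Δt - t1 Δx Δt δ x) Δt, F (x, t) := by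
  have hMm := measurableSet_Mset Δx Δt δ
  have hint : Integrable (Set.indicator (Mset Δx Δt δ) F) ((volume : Measure ℝ).prod volume) := by
    rw [← Measure.volume_eq_prod]
    exact (integrable_indicator_iff hMm).mpr hi
  have step1 : ∫ p in Mset Δx Δt δ, F p
      = ∫ x : ℝ, ∫ t : ℝ, Set.indicator (Mset Δx Δt δ) F (x, t) := by
    rw [← integral_indicator hMm, Measure.volume_eq_prod, integral_prod _ hint]
  rw [step1]
  have step2 : ∀ x : ℝ, (∫ t : ℝ, Set.indicator (Mset Δx Δt δ) F (x, t))
      = ∫ t in Prod.mk x ⁻¹' Mset Δx Δt δ, F (x, t) := by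
    intro x
    rw [← integral_indicator (measurable_prodMk_left hMm)]
    congr 1
  simp_rw [step2]
  have hcompl : ∀ x ∉ Set.Ioo (-Δx) 0, (∫ t in Prod.mk x ⁻¹' Mset Δx Δt δ, F (x, t)) = 0 := by
    intro x hx
    rw [secT_empty Δx Δt δ hx]
    exact setIntegral_empty
  rw [← setIntegral_eq_integral_of_forall_compl_eq_zero hcompl]
  apply setIntegral_congr_fun measurableSet_Ioo
  intro x hx
  simp only [secT_mem Δx Δt δ hΔx hΔt hδ0 hx]

lemma fubiniX (F : ℝ × ℝ → ℝ) (hΔx : 0 < Δx) (hΔt : 0 < Δt) (hδ0 : 0 < δ) (hδ : δ ≤ 1/2)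
    (hi : IntegrableOn F (Mset Δx Δt δ)) :
    ∫ p in Mset Δx Δt δ, F p
      = ∫ t in Set.Ioo 0 Δt, ∫ x in Set.Ioc (-Δx) (-(bb Δx Δt δ t)), F (x, t) := by
  have hMm := measurableSet_Mset Δx Δt δ
  have hint : Integrable (Set.indicator (Mset Δx Δt δ) F) ((volume : Measure ℝ).prod volume) := by
    rw [← Measure.volume_eq_prod]
    exact (integrable_indicator_iff hMm).mpr hi
  have step1 : ∫ p in Mset Δx Δt δ, F p
      = ∫ t : ℝ, ∫ x : ℝ, Set.indicator (Mset Δx Δt δ) F (x, t) := by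
    rw [← integral_indicator hMm, Measure.volume_eq_prod, integral_prod_symm _ hint]
  rw [step1]
  have step2 : ∀ t : ℝ, (∫ x : ℝ, Set.indicator (Mset Δx Δt δ) F (x, t))
      = ∫ x in (fun x => (x, t)) ⁻¹' Mset Δx Δt δ, F (x, t) := by
    intro t
    rw [← integral_indicator (measurable_prodMk_right hMm)]
    congr 1
  simp_rw [step2]
  have hcompl : ∀ t ∉ Set.Ioo 0 Δt, (∫ x in (fun x => (x, t)) ⁻¹' Mset Δx Δt δ, F (x, t)) = 0 := by
    intro t ht
    rw [secX_empty Δx Δt δ ht]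
    exact setIntegral_empty
  rw [← setIntegral_eq_integral_of_forall_compl_eq_zero hcompl]
  apply setIntegral_congr_fun measurableSet_Ioo
  intro t ht
  simp only [secX_mem Δx Δt δ hΔx hΔt hδ0 hδ ht]

end
section
variable (Δx Δt δ : ℝ) (q : ℝ × ℝ → ℝ) (U : Set (ℝ × ℝ))

lemma hasDerivT (hU : IsOpen U) (hq : ContDiffOn ℝ 1 q U) {x t : ℝ} (hp : (x, t) ∈ U) :
    HasDerivAt (fun s => q (x, s) ^ 2 / 2) (q (x, t) * dT q (x, t)) t := by
  have hdiff : DifferentiableAt ℝ q (x, t) :=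
    (hq.differentiableOn one_ne_zero).differentiableAt (hU.mem_nhds hp)
  have h1 : HasDerivAt (fun s : ℝ => (x, s)) ((0:ℝ), (1:ℝ)) t :=
    (hasDerivAt_const t x).prodMk (hasDerivAt_id t)
  have h2 : HasDerivAt (fun s => q (x, s)) (dT q (x, t)) t :=
    hdiff.hasFDerivAt.comp_hasDerivAt t h1
  have h3 := (h2.fun_pow 2).div_const 2
  convert h3 using 1
  exacts [rfl, rfl, by ring]

lemma hasDerivX (hU : IsOpen U) (hq : ContDiffOn ℝ 1 q U) {x t : ℝ} (hp : (x, t) ∈ U) :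
    HasDerivAt (fun s => q (s, t) ^ 2 / 2) (q (x, t) * dX q (x, t)) x := by
  have hdiff : DifferentiableAt ℝ q (x, t) :=
    (hq.differentiableOn one_ne_zero).differentiableAt (hU.mem_nhds hp)
  have h1 : HasDerivAt (fun s : ℝ => (s, t)) ((1:ℝ), (0:ℝ)) x :=
    (hasDerivAt_id x).prodMk (hasDerivAt_const x t)
  have h2 : HasDerivAt (fun s => q (s, t)) (dX q (x, t)) x :=
    hdiff.hasFDerivAt.comp_hasDerivAt x h1
  have h3 := (h2.fun_pow 2).div_const 2
  convert h3 using 1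
  exacts [rfl, rfl, by ring]

lemma contDT (hU : IsOpen U) (hq : ContDiffOn ℝ 1 q U) :
    ContinuousOn (fun p => q p * dT q p) U := by
  have h1 : ContinuousOn (fderiv ℝ q) U := hq.continuousOn_fderiv_of_isOpen hU le_rfl
  exact hq.continuousOn.mul (h1.clm_apply continuousOn_const)

lemma contDX (hU : IsOpen U) (hq : ContDiffOn ℝ 1 q U) :
    ContinuousOn (fun p => q p * dX q p) U := by
  have h1 : ContinuousOn (fderiv ℝ q) U := hq.continuousOn_fderiv_of_isOpen hU le_rfl
  exact hq.continuousOn.mul (h1.clm_apply continuousOn_const)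

end

section
variable (Δx Δt δ : ℝ) (q : ℝ × ℝ → ℝ) (U : Set (ℝ × ℝ))
variable (hΔx : 0 < Δx) (hΔt : 0 < Δt) (hδ0 : 0 < δ) (hδ : δ ≤ 1/2)
variable (hKU : (Set.Icc (-Δx) 0 ×ˢ Set.Icc 0 Δt) \ sliverSet Δx Δt δ ⊆ U)

include hΔx hΔt hδ0 hδ hKU

lemma memU_of (p : ℝ × ℝ) (hx : p.1 ∈ Set.Icc (-Δx) 0) (ht : p.2 ∈ Set.Icc 0 Δt)
    (hg : δ * Δx * (Δt/2) ≤ |p.1| * (Δt / 2) + |p.2 - Δt / 2| * (δ * Δx)) : p ∈ U :=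
  hKU ⟨⟨hx, ht⟩, not_lt.mpr hg⟩

/-- membership of the lower-time segment. -/
lemma memU_low {x t : ℝ} (hx : x ∈ Set.Icc (-Δx) 0) (ht : t ∈ Set.Icc 0 (t1 Δx Δt δ x)) :
    (x, t) ∈ U := by
  have ha : 0 < δ * Δx := mul_pos hδ0 hΔx
  obtain ⟨hx1, hx2⟩ := hx
  obtain ⟨ht1', ht2'⟩ := ht
  have hle : t1 Δx Δt δ x ≤ Δt/2 := min_le_right _ _
  have hle2 : (δ*Δx) * t1 Δx Δt δ x ≤ -x * (Δt/2) := by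
    have h := min_le_left (-x * Δt / (2*(δ*Δx))) (Δt/2)
    have := mul_le_mul_of_nonneg_left h (le_of_lt ha)
    calc (δ*Δx) * t1 Δx Δt δ x ≤ (δ*Δx) * (-x * Δt / (2*(δ*Δx))) := this
    _ = -x * (Δt/2) := by field_simp
  apply memU_of Δx Δt δ U hΔx hΔt hδ0 hδ hKU
  · exact ⟨hx1, hx2⟩
  · exact ⟨ht1', by simp only; linarith⟩
  · simp only
    rw [abs_of_nonpos hx2, abs_of_nonpos (by linarith : t - Δt/2 ≤ 0)]
    nlinarith

/-- membership of the upper-time segment. -/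
lemma memU_high {x t : ℝ} (hx : x ∈ Set.Icc (-Δx) 0) (ht : t ∈ Set.Icc (Δt - t1 Δx Δt δ x) Δt) :
    (x, t) ∈ U := by
  have ha : 0 < δ * Δx := mul_pos hδ0 hΔx
  obtain ⟨hx1, hx2⟩ := hx
  obtain ⟨ht1', ht2'⟩ := ht
  have hle : t1 Δx Δt δ x ≤ Δt/2 := min_le_right _ _
  have hle2 : (δ*Δx) * t1 Δx Δt δ x ≤ -x * (Δt/2) := by
    have h := min_le_left (-x * Δt / (2*(δ*Δx))) (Δt/2)
    have := mul_le_mul_of_nonneg_left h (le_of_lt ha)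
    calc (δ*Δx) * t1 Δx Δt δ x ≤ (δ*Δx) * (-x * Δt / (2*(δ*Δx))) := this
    _ = -x * (Δt/2) := by field_simp
  apply memU_of Δx Δt δ U hΔx hΔt hδ0 hδ hKU
  · exact ⟨hx1, hx2⟩
  · exact ⟨by simp only; linarith, ht2'⟩
  · simp only
    rw [abs_of_nonpos hx2, abs_of_nonneg (by linarith : (0:ℝ) ≤ t - Δt/2)]
    nlinarith

/-- membership of the horizontal segment. -/
lemma memU_hor {x t : ℝ} (ht : t ∈ Set.Icc 0 Δt) (hx : x ∈ Set.Icc (-Δx) (-(bb Δx Δt δ t))) :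
    (x, t) ∈ U := by
  have ha : 0 < δ * Δx := mul_pos hδ0 hΔx
  obtain ⟨ht1', ht2'⟩ := ht
  obtain ⟨hx1, hx2⟩ := hx
  have habs : |t - Δt/2| ≤ Δt/2 := abs_le.mpr ⟨by linarith, by linarith⟩
  have hbb : (bb Δx Δt δ t) * (Δt/2) = δ * Δx * (Δt/2) - |t - Δt/2| * (δ * Δx) := by
    unfold bb; field_simp
  have hbb0 : 0 ≤ bb Δx Δt δ t := by nlinarith
  apply memU_of Δx Δt δ U hΔx hΔt hδ0 hδ hKU
  · exact ⟨hx1, by simp only; linarith⟩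
  · exact ⟨ht1', ht2'⟩
  · simp only
    rw [abs_of_nonpos (by linarith : x ≤ 0)]
    nlinarith

end
section
variable (Δx Δt δ : ℝ) (q : ℝ × ℝ → ℝ) (U : Set (ℝ × ℝ))
variable (hU : IsOpen U) (hq : ContDiffOn ℝ 1 q U)
variable (hΔx : 0 < Δx) (hΔt : 0 < Δt) (hδ0 : 0 < δ) (hδ : δ ≤ 1/2)
variable (hKU : (Set.Icc (-Δx) 0 ×ˢ Set.Icc 0 Δt) \ sliverSet Δx Δt δ ⊆ U)

include hU hq hΔx hΔt hδ0 hδ hKU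

lemma innerT {x : ℝ} (hx : x ∈ Set.Ioo (-Δx) 0) :
    (∫ t in Set.Ioc 0 (t1 Δx Δt δ x) ∪ Set.Ico (Δt - t1 Δx Δt δ x) Δt,
      q (x, t) * dT q (x, t))
    = q (x, t1 Δx Δt δ x) ^ 2 / 2 - q (x, 0) ^ 2 / 2
      + (q (x, Δt) ^ 2 / 2 - q (x, Δt - t1 Δx Δt δ x) ^ 2 / 2) := by
  have ha : 0 < δ * Δx := mul_pos hδ0 hΔx
  set m := t1 Δx Δt δ x with hm
  have hm0 : 0 < m := t1_pos Δx Δt δ hΔt ha hx.2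
  have hmle : m ≤ Δt/2 := min_le_right _ _
  have hxIcc : x ∈ Set.Icc (-Δx) 0 := ⟨le_of_lt hx.1, le_of_lt hx.2⟩
  have hmapsto1 : ∀ t ∈ Set.Icc 0 m, (x, t) ∈ U := fun t ht =>
    memU_low Δx Δt δ U hΔx hΔt hδ0 hδ hKU hxIcc ht
  have hmapsto2 : ∀ t ∈ Set.Icc (Δt - m) Δt, (x, t) ∈ U := fun t ht =>
    memU_high Δx Δt δ U hΔx hΔt hδ0 hδ hKU hxIcc ht
  have hcont1 : ContinuousOn (fun t => q (x, t) * dT q (x, t)) (Set.Icc 0 m) := by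
    refine (contDT q U hU hq).comp (Continuous.continuousOn (by fun_prop)) ?_
    exact fun t ht => hmapsto1 t ht
  have hcont2 : ContinuousOn (fun t => q (x, t) * dT q (x, t)) (Set.Icc (Δt - m) Δt) := by
    refine (contDT q U hU hq).comp (Continuous.continuousOn (by fun_prop)) ?_
    exact fun t ht => hmapsto2 t ht
  have hint1 : IntegrableOn (fun t => q (x, t) * dT q (x, t)) (Set.Ioc 0 m) :=
    (hcont1.integrableOn_compact isCompact_Icc).mono_set Set.Ioc_subset_Icc_self
  have hint2 : IntegrableOn (fun t => q (x, t) * dT q (x, t)) (Set.Ioc (Δt - m) Δt) :=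
    (hcont2.integrableOn_compact isCompact_Icc).mono_set Set.Ioc_subset_Icc_self
  have haeq : (Set.Ioc 0 m ∪ Set.Ico (Δt - m) Δt : Set ℝ)
      =ᵐ[volume] (Set.Ioc 0 m ∪ Set.Ioc (Δt - m) Δt : Set ℝ) :=
    Filter.EventuallyEq.union (Filter.EventuallyEq.refl _ _) Ico_ae_eq_Ioc
  rw [setIntegral_congr_set haeq]
  have hdisj : Disjoint (Set.Ioc 0 m) (Set.Ioc (Δt - m) Δt) := by
    rw [Set.disjoint_left]
    rintro t ⟨_, h2⟩ ⟨h3, _⟩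
    linarith
  rw [setIntegral_union hdisj measurableSet_Ioc hint1 hint2]
  have e1 : ∫ t in Set.Ioc 0 m, q (x, t) * dT q (x, t)
      = ∫ t in (0:ℝ)..m, q (x, t) * dT q (x, t) :=
    (intervalIntegral.integral_of_le (le_of_lt hm0)).symm
  have e2 : ∫ t in Set.Ioc (Δt - m) Δt, q (x, t) * dT q (x, t)
      = ∫ t in (Δt - m)..Δt, q (x, t) * dT q (x, t) :=
    (intervalIntegral.integral_of_le (by linarith)).symm
  rw [e1, e2]
  rw [intervalIntegral.integral_eq_sub_of_hasDerivAt (f := fun t => q (x, t) ^ 2 / 2)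
    (fun t ht => hasDerivT q U hU hq
      (hmapsto1 t (by rwa [Set.uIcc_of_le (le_of_lt hm0)] at ht)))
    (hcont1.mono (by rw [Set.uIcc_of_le (le_of_lt hm0)]) |>.intervalIntegrable)]
  rw [intervalIntegral.integral_eq_sub_of_hasDerivAt (f := fun t => q (x, t) ^ 2 / 2)
    (fun t ht => hasDerivT q U hU hq
      (hmapsto2 t (by rwa [Set.uIcc_of_le (by linarith : Δt - m ≤ Δt)] at ht)))
    (hcont2.mono (by rw [Set.uIcc_of_le (by linarith : Δt - m ≤ Δt)]) |>.intervalIntegrable)]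

lemma innerX {t : ℝ} (ht : t ∈ Set.Ioo 0 Δt) :
    (∫ x in Set.Ioc (-Δx) (-(bb Δx Δt δ t)), q (x, t) * dX q (x, t))
    = q (-(bb Δx Δt δ t), t) ^ 2 / 2 - q (-Δx, t) ^ 2 / 2 := by
  have ha : 0 < δ * Δx := mul_pos hδ0 hΔx
  have haΔ : δ * Δx ≤ Δx / 2 := by nlinarith
  obtain ⟨hb0, hba⟩ := bb_mem Δx Δt δ hΔt ha ht
  have htIcc : t ∈ Set.Icc 0 Δt := ⟨le_of_lt ht.1, le_of_lt ht.2⟩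
  have hle : -Δx ≤ -(bb Δx Δt δ t) := by linarith
  have hmapsto : ∀ x ∈ Set.Icc (-Δx) (-(bb Δx Δt δ t)), (x, t) ∈ U := fun x hx =>
    memU_hor Δx Δt δ U hΔx hΔt hδ0 hδ hKU htIcc hx
  have hcont : ContinuousOn (fun x => q (x, t) * dX q (x, t))
      (Set.Icc (-Δx) (-(bb Δx Δt δ t))) := by
    refine (contDX q U hU hq).comp (Continuous.continuousOn (by fun_prop)) ?_
    exact fun x hx => hmapsto x hx
  have e1 : ∫ x in Set.Ioc (-Δx) (-(bb Δx Δt δ t)), q (x, t) * dX q (x, t)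
      = ∫ x in (-Δx)..(-(bb Δx Δt δ t)), q (x, t) * dX q (x, t) :=
    (intervalIntegral.integral_of_le hle).symm
  rw [e1]
  rw [intervalIntegral.integral_eq_sub_of_hasDerivAt (f := fun x => q (x, t) ^ 2 / 2)
    (fun x hx => hasDerivX q U hU hq
      (hmapsto x (by rwa [Set.uIcc_of_le hle] at hx)))
    (hcont.mono (by rw [Set.uIcc_of_le hle]) |>.intervalIntegrable)]

end
section
variable (Δx Δt δ : ℝ) (q : ℝ × ℝ → ℝ) (U : Set (ℝ × ℝ))
variable (hU : IsOpen U) (hq : ContDiffOn ℝ 1 q U)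
variable (hΔx : 0 < Δx) (hΔt : 0 < Δt) (hδ0 : 0 < δ) (hδ : δ ≤ 1/2)
variable (hKU : (Set.Icc (-Δx) 0 ×ˢ Set.Icc 0 Δt) \ sliverSet Δx Δt δ ⊆ U)

include hU hq hΔx hΔt hδ0 hδ hKU

lemma integrableOn_Mset (F : ℝ × ℝ → ℝ) (hF : ContinuousOn F U) :
    IntegrableOn F (Mset Δx Δt δ) := by
  have hKclosed : IsClosed ((Set.Icc (-Δx) 0 ×ˢ Set.Icc 0 Δt) \ sliverSet Δx Δt δ) :=
    (isClosed_Icc.prod isClosed_Icc).sdiff (isOpen_sliver Δx Δt δ)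
  have hKcomp : IsCompact ((Set.Icc (-Δx) 0 ×ˢ Set.Icc 0 Δt) \ sliverSet Δx Δt δ) :=
    (isCompact_Icc.prod isCompact_Icc).of_isClosed_subset hKclosed Set.diff_subset
  have hcont : ContinuousOn F ((Set.Icc (-Δx) 0 ×ˢ Set.Icc 0 Δt) \ sliverSet Δx Δt δ) :=
    hF.mono hKU
  exact (hcont.integrableOn_compact hKcomp).mono_set
    (Set.diff_subset_diff_left (Set.prod_mono Set.Ioo_subset_Icc_self Set.Ioo_subset_Icc_self))

lemma outT :
    ∫ p in Mset Δx Δt δ, q p * dT q p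
    = ((∫ x in (-Δx)..(0:ℝ), q (x, Δt) ^ 2) - (∫ x in (-Δx)..(0:ℝ), q (x, 0) ^ 2)) / 2
      + (δ * Δx) * ((∫ s in (0:ℝ)..1, q (-(s * (δ * Δx)), s * (Δt / 2)) ^ 2)
          - (∫ s in (0:ℝ)..1, q (-((1 - s) * (δ * Δx)), (1 + s) * (Δt / 2)) ^ 2)) / 2 := by
  have ha : 0 < δ * Δx := mul_pos hδ0 hΔx
  have haΔ : δ * Δx ≤ Δx / 2 := by nlinarith
  have hi : IntegrableOn (fun p => q p * dT q p) (Mset Δx Δt δ) :=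
    integrableOn_Mset Δx Δt δ q U hU hq hΔx hΔt hδ0 hδ hKU _ (contDT q U hU hq)
  rw [fubiniT Δx Δt δ _ hΔx hΔt hδ0 hi]
  -- replace inner integral by FTC value
  rw [setIntegral_congr_fun measurableSet_Ioo
    (fun x hx => innerT Δx Δt δ q U hU hq hΔx hΔt hδ0 hδ hKU hx)]
  -- continuity facts for the four boundary-value functions
  have hc_top : ContinuousOn (fun x => q (x, Δt)) (Set.Icc (-Δx) 0) := by
    refine hq.continuousOn.comp (Continuous.continuousOn (by fun_prop)) (fun x hx => ?_)
    exact memU_high Δx Δt δ U hΔx hΔt hδ0 hδ hKU hx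
      ⟨by linarith [t1_nonneg Δx Δt δ hΔx hΔt hδ0 (hx.2 : x ≤ 0)], le_rfl⟩
  have hc_bot : ContinuousOn (fun x => q (x, 0)) (Set.Icc (-Δx) 0) := by
    refine hq.continuousOn.comp (Continuous.continuousOn (by fun_prop)) (fun x hx => ?_)
    exact memU_low Δx Δt δ U hΔx hΔt hδ0 hδ hKU hx
      ⟨le_rfl, t1_nonneg Δx Δt δ hΔx hΔt hδ0 (hx.2 : x ≤ 0)⟩
  have hc_m1 : ContinuousOn (fun x => q (x, t1 Δx Δt δ x)) (Set.Icc (-Δx) 0) := by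
    refine hq.continuousOn.comp
      (Continuous.continuousOn (continuous_id.prodMk (cont_t1 Δx Δt δ)))
      (fun x hx => ?_)
    exact memU_low Δx Δt δ U hΔx hΔt hδ0 hδ hKU hx
      ⟨t1_nonneg Δx Δt δ hΔx hΔt hδ0 (hx.2 : x ≤ 0), le_rfl⟩
  have hc_m2 : ContinuousOn (fun x => q (x, Δt - t1 Δx Δt δ x)) (Set.Icc (-Δx) 0) := by
    refine hq.continuousOn.comp
      (Continuous.continuousOn (continuous_id.prodMk
        (continuous_const.sub (cont_t1 Δx Δt δ))))
      (fun x hx => ?_)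
    exact memU_high Δx Δt δ U hΔx hΔt hδ0 hδ hKU hx ⟨le_rfl,
      by linarith [t1_nonneg Δx Δt δ hΔx hΔt hδ0 (hx.2 : x ≤ 0)]⟩
  have hle0 : -Δx ≤ (0:ℝ) := by linarith
  have hlea : -Δx ≤ -(δ*Δx) := by linarith
  have hlea0 : -(δ*Δx) ≤ (0:ℝ) := by linarith
  -- convert to an interval integral
  rw [setIntegral_congr_set Ioo_ae_eq_Ioc, ← intervalIntegral.integral_of_le hle0]
  -- intervalIntegrability of pieces
  have iiM : IntervalIntegrable
      (fun x => q (x, t1 Δx Δt δ x) ^ 2 / 2 - q (x, Δt - t1 Δx Δt δ x) ^ 2 / 2)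
      volume (-Δx) 0 := by
    apply ContinuousOn.intervalIntegrable
    rw [Set.uIcc_of_le hle0]
    exact ((hc_m1.pow 2).div_const 2).sub ((hc_m2.pow 2).div_const 2)
  have iiTop : IntervalIntegrable (fun x => q (x, Δt) ^ 2 / 2) volume (-Δx) 0 := by
    apply ContinuousOn.intervalIntegrable
    rw [Set.uIcc_of_le hle0]
    exact (hc_top.pow 2).div_const 2
  have iiBot : IntervalIntegrable (fun x => q (x, 0) ^ 2 / 2) volume (-Δx) 0 := by
    apply ContinuousOn.intervalIntegrable
    rw [Set.uIcc_of_le hle0]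
    exact (hc_bot.pow 2).div_const 2
  have hsplit : (∫ x in (-Δx)..(0:ℝ),
        (q (x, t1 Δx Δt δ x) ^ 2 / 2 - q (x, 0) ^ 2 / 2
          + (q (x, Δt) ^ 2 / 2 - q (x, Δt - t1 Δx Δt δ x) ^ 2 / 2)))
      = (∫ x in (-Δx)..(0:ℝ),
          (q (x, t1 Δx Δt δ x) ^ 2 / 2 - q (x, Δt - t1 Δx Δt δ x) ^ 2 / 2))
        + (∫ x in (-Δx)..(0:ℝ), q (x, Δt) ^ 2 / 2)
        - (∫ x in (-Δx)..(0:ℝ), q (x, 0) ^ 2 / 2) := by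
    rw [← intervalIntegral.integral_add iiM iiTop, ← intervalIntegral.integral_sub (iiM.add iiTop) iiBot]
    apply intervalIntegral.integral_congr
    intro x _
    ring
  rw [hsplit]
  -- the top and bottom terms
  have htop2 : (∫ x in (-Δx)..(0:ℝ), q (x, Δt) ^ 2 / 2)
      = (∫ x in (-Δx)..(0:ℝ), q (x, Δt) ^ 2) / 2 := intervalIntegral.integral_div 2 _
  have hbot2 : (∫ x in (-Δx)..(0:ℝ), q (x, 0) ^ 2 / 2)
      = (∫ x in (-Δx)..(0:ℝ), q (x, 0) ^ 2) / 2 := intervalIntegral.integral_div 2 _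
  -- split the sliver-face term at -(δ*Δx)
  have iiM1 : IntervalIntegrable
      (fun x => q (x, t1 Δx Δt δ x) ^ 2 / 2 - q (x, Δt - t1 Δx Δt δ x) ^ 2 / 2)
      volume (-Δx) (-(δ*Δx)) := by
    apply ContinuousOn.intervalIntegrable
    rw [Set.uIcc_of_le hlea]
    refine (((hc_m1.pow 2).div_const 2).sub ((hc_m2.pow 2).div_const 2)).mono ?_
    exact Set.Icc_subset_Icc le_rfl hlea0
  have iiM2 : IntervalIntegrable
      (fun x => q (x, t1 Δx Δt δ x) ^ 2 / 2 - q (x, Δt - t1 Δx Δt δ x) ^ 2 / 2)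
      volume (-(δ*Δx)) 0 := by
    apply ContinuousOn.intervalIntegrable
    rw [Set.uIcc_of_le hlea0]
    refine (((hc_m1.pow 2).div_const 2).sub ((hc_m2.pow 2).div_const 2)).mono ?_
    exact Set.Icc_subset_Icc hlea le_rfl
  rw [← intervalIntegral.integral_add_adjacent_intervals iiM1 iiM2]
  -- the first piece vanishes
  have hzero1 : (∫ x in (-Δx)..(-(δ*Δx)),
      (q (x, t1 Δx Δt δ x) ^ 2 / 2 - q (x, Δt - t1 Δx Δt δ x) ^ 2 / 2)) = 0 := by
    rw [intervalIntegral.integral_congr (g := fun _ => (0:ℝ)) ?_, intervalIntegral.integral_zero]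
    intro x hx
    rw [Set.uIcc_of_le hlea] at hx
    have hmin : t1 Δx Δt δ x = Δt/2 := by
      apply min_eq_right
      rw [le_div_iff₀ (by positivity)]
      nlinarith [hx.2]
    simp only [hmin]
    rw [show Δt - Δt/2 = Δt/2 by ring, sub_self]
  rw [hzero1, zero_add]
  -- on [-(δΔx),0] rewrite t1 explicitly
  have hcongr2 : (∫ x in (-(δ*Δx))..(0:ℝ),
      (q (x, t1 Δx Δt δ x) ^ 2 / 2 - q (x, Δt - t1 Δx Δt δ x) ^ 2 / 2))
      = ∫ x in (-(δ*Δx))..(0:ℝ),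
        (q (x, -x * Δt / (2*(δ*Δx))) ^ 2 / 2 - q (x, Δt + x * Δt / (2*(δ*Δx))) ^ 2 / 2) := by
    apply intervalIntegral.integral_congr
    intro x hx
    rw [Set.uIcc_of_le hlea0] at hx
    have hmin : t1 Δx Δt δ x = -x * Δt / (2*(δ*Δx)) := by
      apply min_eq_left
      rw [div_le_iff₀ (by positivity)]
      nlinarith [hx.1]
    simp only [hmin, show Δt - -x * Δt / (2*(δ*Δx)) = Δt + x * Δt / (2*(δ*Δx)) from by ring]
  rw [hcongr2]
  -- integrability and membership for the two substituted faces
  have hmemG1 : ∀ x ∈ Set.Icc (-(δ*Δx)) 0, (x, -x * Δt / (2*(δ*Δx))) ∈ U := by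
    intro x hx
    have hmin : t1 Δx Δt δ x = -x * Δt / (2*(δ*Δx)) :=
      min_eq_left (by rw [div_le_iff₀ (by positivity)]; nlinarith [hx.1])
    exact memU_low Δx Δt δ U hΔx hΔt hδ0 hδ hKU ⟨by linarith [hx.1], hx.2⟩
      ⟨div_nonneg (by nlinarith [hx.2]) (by positivity), le_of_eq hmin.symm⟩
  have hmemG2 : ∀ x ∈ Set.Icc (-(δ*Δx)) 0, (x, Δt + x * Δt / (2*(δ*Δx))) ∈ U := by
    intro x hx
    have hmin : t1 Δx Δt δ x = -x * Δt / (2*(δ*Δx)) :=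
      min_eq_left (by rw [div_le_iff₀ (by positivity)]; nlinarith [hx.1])
    refine memU_high Δx Δt δ U hΔx hΔt hδ0 hδ hKU ⟨by linarith [hx.1], hx.2⟩
      ⟨le_of_eq (by rw [hmin]; ring), ?_⟩
    have : x * Δt / (2*(δ*Δx)) ≤ 0 :=
      div_nonpos_of_nonpos_of_nonneg (by nlinarith [hx.2]) (by positivity)
    linarith
  have hcG1 : ContinuousOn (fun x => q (x, -x * Δt / (2*(δ*Δx))) ^ 2 / 2)
      (Set.Icc (-(δ*Δx)) 0) := by
    refine (((hq.continuousOn.comp (Continuous.continuousOn (by fun_prop))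
      (fun x hx => hmemG1 x hx)).pow 2).div_const 2)
  have hcG2 : ContinuousOn (fun x => q (x, Δt + x * Δt / (2*(δ*Δx))) ^ 2 / 2)
      (Set.Icc (-(δ*Δx)) 0) := by
    refine (((hq.continuousOn.comp (Continuous.continuousOn (by fun_prop))
      (fun x hx => hmemG2 x hx)).pow 2).div_const 2)
  have iiG1 : IntervalIntegrable (fun x => q (x, -x * Δt / (2*(δ*Δx))) ^ 2 / 2)
      volume (-(δ*Δx)) 0 := by
    apply ContinuousOn.intervalIntegrable
    rwa [Set.uIcc_of_le hlea0]
  have iiG2 : IntervalIntegrable (fun x => q (x, Δt + x * Δt / (2*(δ*Δx))) ^ 2 / 2)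
      volume (-(δ*Δx)) 0 := by
    apply ContinuousOn.intervalIntegrable
    rwa [Set.uIcc_of_le hlea0]
  rw [intervalIntegral.integral_sub iiG1 iiG2]
  -- substitution for the lower face
  have harg1 : ∀ s : ℝ, ((-(δ*Δx)*s : ℝ), -(-(δ*Δx)*s) * Δt / (2*(δ*Δx))) = (-(s*(δ*Δx)), s*(Δt/2)) := by
    intro s
    rw [Prod.mk.injEq]
    constructor
    · ring
    · field_simp
  have e1 : (∫ x in (-(δ*Δx))..(0:ℝ), q (x, -x * Δt / (2*(δ*Δx))) ^ 2 / 2)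
      = (δ*Δx) • ∫ s in (0:ℝ)..1, q (-(s*(δ*Δx)), s*(Δt/2)) ^ 2 / 2 := by
    have h1 := intervalIntegral.smul_integral_comp_mul_left (a := (0:ℝ)) (b := 1)
      (f := fun x => q (x, -x * Δt / (2*(δ*Δx))) ^ 2 / 2) (-(δ*Δx))
    rw [show (-(δ*Δx))*(0:ℝ) = 0 by ring, show (-(δ*Δx))*(1:ℝ) = -(δ*Δx) by ring] at h1
    rw [intervalIntegral.integral_symm, ← h1, neg_smul, neg_neg]
    congr 1
    apply intervalIntegral.integral_congr
    intro s _
    simp only [harg1]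
  -- substitution for the upper face
  have harg2 : ∀ s : ℝ, (((δ*Δx)*s + -(δ*Δx) : ℝ), Δt + ((δ*Δx)*s + -(δ*Δx)) * Δt / (2*(δ*Δx)))
      = (-((1-s)*(δ*Δx)), (1+s)*(Δt/2)) := by
    intro s
    rw [Prod.mk.injEq]
    constructor
    · ring
    · field_simp
      ring
  have e2 : (∫ x in (-(δ*Δx))..(0:ℝ), q (x, Δt + x * Δt / (2*(δ*Δx))) ^ 2 / 2)
      = (δ*Δx) • ∫ s in (0:ℝ)..1, q (-((1-s)*(δ*Δx)), (1+s)*(Δt/2)) ^ 2 / 2 := by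
    have h2 := intervalIntegral.smul_integral_comp_mul_add (a := (0:ℝ)) (b := 1)
      (f := fun x => q (x, Δt + x * Δt / (2*(δ*Δx))) ^ 2 / 2) (δ*Δx) (-(δ*Δx))
    rw [show (δ*Δx)*(0:ℝ) + -(δ*Δx) = -(δ*Δx) by ring,
      show (δ*Δx)*(1:ℝ) + -(δ*Δx) = 0 by ring] at h2
    rw [← h2]
    congr 1
    apply intervalIntegral.integral_congr
    intro s _
    simp only [harg2]
  rw [e1, e2, htop2, hbot2, intervalIntegral.integral_div, intervalIntegral.integral_div,
    smul_eq_mul, smul_eq_mul]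
  ring

end
section
variable (Δx Δt δ : ℝ) (q : ℝ × ℝ → ℝ) (U : Set (ℝ × ℝ))
variable (hU : IsOpen U) (hq : ContDiffOn ℝ 1 q U)
variable (hΔx : 0 < Δx) (hΔt : 0 < Δt) (hδ0 : 0 < δ) (hδ : δ ≤ 1/2)
variable (hKU : (Set.Icc (-Δx) 0 ×ˢ Set.Icc 0 Δt) \ sliverSet Δx Δt δ ⊆ U)

include hU hq hΔx hΔt hδ0 hδ hKU

lemma outX :
    ∫ p in Mset Δx Δt δ, q p * dX q p
    = (Δt/2) * ((∫ s in (0:ℝ)..1, q (-(s * (δ * Δx)), s * (Δt / 2)) ^ 2)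
        + (∫ s in (0:ℝ)..1, q (-((1 - s) * (δ * Δx)), (1 + s) * (Δt / 2)) ^ 2)) / 2
      - (∫ t in (0:ℝ)..Δt, q (-Δx, t) ^ 2) / 2 := by
  have ha : 0 < δ * Δx := mul_pos hδ0 hΔx
  have haΔ : δ * Δx ≤ Δx / 2 := by nlinarith
  have hi : IntegrableOn (fun p => q p * dX q p) (Mset Δx Δt δ) :=
    integrableOn_Mset Δx Δt δ q U hU hq hΔx hΔt hδ0 hδ hKU _ (contDX q U hU hq)
  rw [fubiniX Δx Δt δ _ hΔx hΔt hδ0 hδ hi]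
  rw [setIntegral_congr_fun measurableSet_Ioo
    (fun t ht => innerX Δx Δt δ q U hU hq hΔx hΔt hδ0 hδ hKU ht)]
  have hT0 : (0:ℝ) ≤ Δt := le_of_lt hΔt
  have hT2 : (0:ℝ) ≤ Δt/2 := by linarith
  have hT3 : Δt/2 ≤ Δt := by linarith
  have hbb_le : ∀ t : ℝ, bb Δx Δt δ t ≤ δ * Δx := by
    intro t
    unfold bb
    have : 0 ≤ 2 * (δ * Δx) / Δt * |t - Δt/2| := by positivity
    linarith
  have hbb_cont : Continuous (bb Δx Δt δ) := by
    unfold bb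
    fun_prop
  have hmemL : ∀ t ∈ Set.Icc 0 Δt, ((-Δx : ℝ), t) ∈ U := by
    intro t ht
    exact memU_hor Δx Δt δ U hΔx hΔt hδ0 hδ hKU ht ⟨le_rfl, by linarith [hbb_le t]⟩
  have hmemB : ∀ t ∈ Set.Icc 0 Δt, ((-(bb Δx Δt δ t) : ℝ), t) ∈ U := by
    intro t ht
    exact memU_hor Δx Δt δ U hΔx hΔt hδ0 hδ hKU ht ⟨by linarith [hbb_le t], le_rfl⟩
  have hcL : ContinuousOn (fun t => q (-Δx, t) ^ 2 / 2) (Set.Icc 0 Δt) :=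
    ((hq.continuousOn.comp (Continuous.continuousOn (by fun_prop))
      (fun t ht => hmemL t ht)).pow 2).div_const 2
  have hcB : ContinuousOn (fun t => q (-(bb Δx Δt δ t), t) ^ 2 / 2) (Set.Icc 0 Δt) :=
    ((hq.continuousOn.comp
      (Continuous.continuousOn ((hbb_cont.neg).prodMk continuous_id))
      (fun t ht => hmemB t ht)).pow 2).div_const 2
  have iiL : IntervalIntegrable (fun t => q (-Δx, t) ^ 2 / 2) volume 0 Δt := by
    apply ContinuousOn.intervalIntegrable
    rwa [Set.uIcc_of_le hT0]
  have iiB : IntervalIntegrable (fun t => q (-(bb Δx Δt δ t), t) ^ 2 / 2) volume 0 Δt := by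
    apply ContinuousOn.intervalIntegrable
    rwa [Set.uIcc_of_le hT0]
  rw [setIntegral_congr_set Ioo_ae_eq_Ioc, ← intervalIntegral.integral_of_le hT0,
    intervalIntegral.integral_sub iiB iiL]
  -- split the bb-term at Δt/2
  have iiB1 : IntervalIntegrable (fun t => q (-(bb Δx Δt δ t), t) ^ 2 / 2) volume 0 (Δt/2) := by
    apply ContinuousOn.intervalIntegrable
    rw [Set.uIcc_of_le hT2]
    exact hcB.mono (Set.Icc_subset_Icc le_rfl hT3)
  have iiB2 : IntervalIntegrable (fun t => q (-(bb Δx Δt δ t), t) ^ 2 / 2) volume (Δt/2) Δt := by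
    apply ContinuousOn.intervalIntegrable
    rw [Set.uIcc_of_le hT3]
    exact hcB.mono (Set.Icc_subset_Icc hT2 le_rfl)
  rw [← intervalIntegral.integral_add_adjacent_intervals iiB1 iiB2]
  have hcong1 : (∫ t in (0:ℝ)..(Δt/2), q (-(bb Δx Δt δ t), t) ^ 2 / 2)
      = ∫ t in (0:ℝ)..(Δt/2), q (-(2*(δ*Δx)/Δt*t), t) ^ 2 / 2 := by
    apply intervalIntegral.integral_congr
    intro t ht
    rw [Set.uIcc_of_le hT2] at ht
    have hpair : ((-(bb Δx Δt δ t) : ℝ), t) = (-(2*(δ*Δx)/Δt*t), t) := by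
      rw [Prod.mk.injEq]
      refine ⟨?_, rfl⟩
      unfold bb
      rw [abs_of_nonpos (by linarith [ht.2] : t - Δt/2 ≤ 0)]
      field_simp
      ring
    simp only [hpair]
  have hcong2 : (∫ t in (Δt/2)..Δt, q (-(bb Δx Δt δ t), t) ^ 2 / 2)
      = ∫ t in (Δt/2)..Δt, q (-(2*(δ*Δx) - 2*(δ*Δx)/Δt*t), t) ^ 2 / 2 := by
    apply intervalIntegral.integral_congr
    intro t ht
    rw [Set.uIcc_of_le hT3] at ht
    have hpair : ((-(bb Δx Δt δ t) : ℝ), t) = (-(2*(δ*Δx) - 2*(δ*Δx)/Δt*t), t) := by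
      rw [Prod.mk.injEq]
      refine ⟨?_, rfl⟩
      unfold bb
      rw [abs_of_nonneg (by linarith [ht.1] : (0:ℝ) ≤ t - Δt/2)]
      field_simp
      ring
    simp only [hpair]
  rw [hcong1, hcong2]
  -- substitutions
  have harg1 : ∀ s : ℝ, ((-(2*(δ*Δx)/Δt*((Δt/2)*s)) : ℝ), (Δt/2)*s) = (-(s*(δ*Δx)), s*(Δt/2)) := by
    intro s
    rw [Prod.mk.injEq]
    constructor
    · field_simp
    · ring
  have e1 : (∫ t in (0:ℝ)..(Δt/2), q (-(2*(δ*Δx)/Δt*t), t) ^ 2 / 2)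
      = (Δt/2) • ∫ s in (0:ℝ)..1, q (-(s*(δ*Δx)), s*(Δt/2)) ^ 2 / 2 := by
    have h1 := intervalIntegral.smul_integral_comp_mul_left (a := (0:ℝ)) (b := 1)
      (f := fun t => q (-(2*(δ*Δx)/Δt*t), t) ^ 2 / 2) (Δt/2)
    rw [show (Δt/2)*(0:ℝ) = 0 by ring, show (Δt/2)*(1:ℝ) = Δt/2 by ring] at h1
    rw [← h1]
    congr 1
    apply intervalIntegral.integral_congr
    intro s _
    simp only [harg1]
  have harg2 : ∀ s : ℝ,
      ((-(2*(δ*Δx) - 2*(δ*Δx)/Δt*((Δt/2)*s + Δt/2)) : ℝ), (Δt/2)*s + Δt/2)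
        = (-((1-s)*(δ*Δx)), (1+s)*(Δt/2)) := by
    intro s
    rw [Prod.mk.injEq]
    constructor
    · field_simp
      ring
    · ring
  have e2 : (∫ t in (Δt/2)..Δt, q (-(2*(δ*Δx) - 2*(δ*Δx)/Δt*t), t) ^ 2 / 2)
      = (Δt/2) • ∫ s in (0:ℝ)..1, q (-((1-s)*(δ*Δx)), (1+s)*(Δt/2)) ^ 2 / 2 := by
    have h2 := intervalIntegral.smul_integral_comp_mul_add (a := (0:ℝ)) (b := 1)
      (f := fun t => q (-(2*(δ*Δx) - 2*(δ*Δx)/Δt*t), t) ^ 2 / 2) (Δt/2) (Δt/2)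
    rw [show (Δt/2)*(0:ℝ) + Δt/2 = Δt/2 by ring, show (Δt/2)*(1:ℝ) + Δt/2 = Δt by ring] at h2
    rw [← h2]
    congr 1
    apply intervalIntegral.integral_congr
    intro s _
    simp only [harg2]
  rw [e1, e2, intervalIntegral.integral_div, intervalIntegral.integral_div,
    intervalIntegral.integral_div, smul_eq_mul, smul_eq_mul]
  ring

end
/-- Energy inequality on the control volume to the left of a sliver.
If `q` is `C¹` on a neighbourhood of the closure of `C⁻`, `u` is continuous on
`[−Δx,0]`, `w` is continuous on `[0,Δt]` (the inflow trace on the vertical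
interface `x = −Δx`), and the tested variational identity
`∫_{−Δx}^0 q(x,Δt)² dx − ∫_{−Δx}^0 q(x,0)u(x) dx − ∬_{C⁻} q(∂ₜq + ∂ₓq) dx dt
  − {q²}⁻ − ∫₀^{Δt} q(−Δx,t)w(t) dt = 0`
holds, then
`∫_{−Δx}^0 q(x,Δt)² dx − ∫_{−Δx}^0 u(x)² dx − {q²}⁻ − ∫₀^{Δt} w(t)² dt ≤ 0`. -/
theorem energy_inequality_Cminus (Δx Δt δ : ℝ)
    (hΔx : 0 < Δx) (hΔt : 0 < Δt) (hδ0 : 0 < δ) (hδ : δ ≤ 1 / 2)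
    (q : ℝ × ℝ → ℝ) (U : Set (ℝ × ℝ)) (hU : IsOpen U)
    (hCU : closure (Cminus Δx Δt δ) ⊆ U) (hq : ContDiffOn ℝ 1 q U)
    (u : ℝ → ℝ) (hu : ContinuousOn u (Set.Icc (-Δx) 0))
    (w : ℝ → ℝ) (hw : ContinuousOn w (Set.Icc 0 Δt))
    (hvar : (∫ x in (-Δx)..(0:ℝ), (q (x, Δt)) ^ 2)
        - (∫ x in (-Δx)..(0:ℝ), q (x, 0) * u x)
        - (∫ p in Cminus Δx Δt δ, q p * (dT q p + dX q p))
        - pairMinus Δx Δt δ (fun p => (q p) ^ 2)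
        - (∫ t in (0:ℝ)..Δt, q (-Δx, t) * w t) = 0) :
    (∫ x in (-Δx)..(0:ℝ), (q (x, Δt)) ^ 2) - (∫ x in (-Δx)..(0:ℝ), (u x) ^ 2)
      - pairMinus Δx Δt δ (fun p => (q p) ^ 2)
      - (∫ t in (0:ℝ)..Δt, (w t) ^ 2) ≤ 0 := by
  have ha : 0 < δ * Δx := mul_pos hδ0 hΔx
  have haΔ : δ * Δx ≤ Δx / 2 := by nlinarith
  have hKU : (Set.Icc (-Δx) 0 ×ˢ Set.Icc 0 Δt) \ sliverSet Δx Δt δ ⊆ U :=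
    (key_subset Δx Δt δ hΔx hΔt hδ0 hδ).trans hCU
  have hle0 : -Δx ≤ (0:ℝ) := by linarith
  have hT0 : (0:ℝ) ≤ Δt := le_of_lt hΔt
  -- rewrite the control-volume integral
  have hMeq : (∫ p in Cminus Δx Δt δ, q p * (dT q p + dX q p))
      = ∫ p in Mset Δx Δt δ, q p * (dT q p + dX q p) :=
    setIntegral_congr_set (Cminus_ae_eq Δx Δt δ hΔx hΔt hδ0)
  have hiT : IntegrableOn (fun p => q p * dT q p) (Mset Δx Δt δ) :=
    integrableOn_Mset Δx Δt δ q U hU hq hΔx hΔt hδ0 hδ hKU _ (contDT q U hU hq)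
  have hiX : IntegrableOn (fun p => q p * dX q p) (Mset Δx Δt δ) :=
    integrableOn_Mset Δx Δt δ q U hU hq hΔx hΔt hδ0 hδ hKU _ (contDX q U hU hq)
  have hsum : (∫ p in Mset Δx Δt δ, q p * (dT q p + dX q p))
      = (∫ p in Mset Δx Δt δ, q p * dT q p) + (∫ p in Mset Δx Δt δ, q p * dX q p) := by
    simp_rw [mul_add]
    exact integral_add hiT hiX
  have hD := hsum.trans (by
    rw [outT Δx Δt δ q U hU hq hΔx hΔt hδ0 hδ hKU, outX Δx Δt δ q U hU hq hΔx hΔt hδ0 hδ hKU])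
  -- the pairing value
  have hP : pairMinus Δx Δt δ (fun p => (q p) ^ 2)
      = -((∫ s in (0:ℝ)..1, q (-(s * (δ * Δx)), s * (Δt / 2)) ^ 2) * (Δt / 2 + δ * Δx))
        - (∫ s in (0:ℝ)..1, q (-((1 - s) * (δ * Δx)), (1 + s) * (Δt / 2)) ^ 2) * (Δt / 2 - δ * Δx) := by
    simp only [pairMinus]
    rw [intervalIntegral.integral_mul_const, intervalIntegral.integral_mul_const]
  -- boundary continuity for the square expansions
  have hc_bot : ContinuousOn (fun x => q (x, 0)) (Set.Icc (-Δx) 0) := by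
    refine hq.continuousOn.comp (Continuous.continuousOn (by fun_prop)) (fun x hx => ?_)
    exact memU_low Δx Δt δ U hΔx hΔt hδ0 hδ hKU hx
      ⟨le_rfl, t1_nonneg Δx Δt δ hΔx hΔt hδ0 (hx.2 : x ≤ 0)⟩
  have hbb_le : ∀ t : ℝ, bb Δx Δt δ t ≤ δ * Δx := by
    intro t
    unfold bb
    have : 0 ≤ 2 * (δ * Δx) / Δt * |t - Δt/2| := by positivity
    linarith
  have hc_left : ContinuousOn (fun t => q (-Δx, t)) (Set.Icc 0 Δt) := by
    refine hq.continuousOn.comp (Continuous.continuousOn (by fun_prop)) (fun t ht => ?_)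
    exact memU_hor Δx Δt δ U hΔx hΔt hδ0 hδ hKU ht ⟨le_rfl, by linarith [hbb_le t]⟩
  -- square expansions
  have iiQ0 : IntervalIntegrable (fun x => q (x, 0) ^ 2) volume (-Δx) 0 := by
    apply ContinuousOn.intervalIntegrable
    rw [Set.uIcc_of_le hle0]; exact hc_bot.pow 2
  have iiQu : IntervalIntegrable (fun x => q (x, 0) * u x) volume (-Δx) 0 := by
    apply ContinuousOn.intervalIntegrable
    rw [Set.uIcc_of_le hle0]; exact hc_bot.mul hu
  have iiU2 : IntervalIntegrable (fun x => (u x) ^ 2) volume (-Δx) 0 := by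
    apply ContinuousOn.intervalIntegrable
    rw [Set.uIcc_of_le hle0]; exact hu.pow 2
  have iiL2 : IntervalIntegrable (fun t => q (-Δx, t) ^ 2) volume 0 Δt := by
    apply ContinuousOn.intervalIntegrable
    rw [Set.uIcc_of_le hT0]; exact hc_left.pow 2
  have iiLw : IntervalIntegrable (fun t => q (-Δx, t) * w t) volume 0 Δt := by
    apply ContinuousOn.intervalIntegrable
    rw [Set.uIcc_of_le hT0]; exact hc_left.mul hw
  have iiW2 : IntervalIntegrable (fun t => (w t) ^ 2) volume 0 Δt := by
    apply ContinuousOn.intervalIntegrable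
    rw [Set.uIcc_of_le hT0]; exact hw.pow 2
  have hSQ1 : (∫ x in (-Δx)..(0:ℝ), (q (x, 0) - u x) ^ 2)
      = (∫ x in (-Δx)..(0:ℝ), q (x, 0) ^ 2) - 2 * (∫ x in (-Δx)..(0:ℝ), q (x, 0) * u x)
        + (∫ x in (-Δx)..(0:ℝ), (u x) ^ 2) := by
    have e : (∫ x in (-Δx)..(0:ℝ), (q (x, 0) - u x) ^ 2)
        = ∫ x in (-Δx)..(0:ℝ), (q (x, 0) ^ 2 - 2 * (q (x, 0) * u x) + (u x) ^ 2) := by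
      apply intervalIntegral.integral_congr
      intro x _
      ring
    rw [e, intervalIntegral.integral_add (iiQ0.sub (iiQu.const_mul 2)) iiU2,
      intervalIntegral.integral_sub iiQ0 (iiQu.const_mul 2),
      intervalIntegral.integral_const_mul]
  have hSQ2 : (∫ t in (0:ℝ)..Δt, (q (-Δx, t) - w t) ^ 2)
      = (∫ t in (0:ℝ)..Δt, q (-Δx, t) ^ 2) - 2 * (∫ t in (0:ℝ)..Δt, q (-Δx, t) * w t)
        + (∫ t in (0:ℝ)..Δt, (w t) ^ 2) := by
    have e : (∫ t in (0:ℝ)..Δt, (q (-Δx, t) - w t) ^ 2)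
        = ∫ t in (0:ℝ)..Δt, (q (-Δx, t) ^ 2 - 2 * (q (-Δx, t) * w t) + (w t) ^ 2) := by
      apply intervalIntegral.integral_congr
      intro t _
      ring
    rw [e, intervalIntegral.integral_add (iiL2.sub (iiLw.const_mul 2)) iiW2,
      intervalIntegral.integral_sub iiL2 (iiLw.const_mul 2),
      intervalIntegral.integral_const_mul]
  have hnn1 : 0 ≤ ∫ x in (-Δx)..(0:ℝ), (q (x, 0) - u x) ^ 2 :=
    intervalIntegral.integral_nonneg hle0 (fun x _ => sq_nonneg _)
  have hnn2 : 0 ≤ ∫ t in (0:ℝ)..Δt, (q (-Δx, t) - w t) ^ 2 :=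
    intervalIntegral.integral_nonneg hT0 (fun t _ => sq_nonneg _)
  rw [hMeq, hD, hP] at hvar
  rw [hP]
  nlinarith [hvar, hSQ1, hSQ2, hnn1, hnn2]
end
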